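/- arXiv:2004.07128 — 4 statements merged into one kernel-verified Lean document; each statement's English description precedes it below -/
import Mathlib

section
/- For the ECA rule 128, with local rule h(a,b,c) = a ∧ b ∧ c, and for every n ≥ 1: if two block-sequential update schedules τ and τ' are non-equivalent (lab_τ ≠ lab_τ'), then dset_τ(i) = dset_τ'(i) for every cell i ∈ ℤ/nℤ if and only if f^{(τ)} = f^{(τ')}, i.e. the two dynamics are identical. -/
/-- One round of a block-sequential update: all cells of rank `k` are updated
simultaneously by the ECA local rule `h`, reading the current states. -/
def ecaStep (n : ℕ) (h : Bool → Bool → Bool → Bool) (τ : ZMod n → ℕ) (k : ℕ)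
    (x : ZMod n → Bool) : ZMod n → Bool :=
  fun i => if τ i = k then h (x (i - 1)) (x i) (x (i + 1)) else x i

/-- State after processing ranks `0, 1, …, k` in increasing order. -/
def ecaUpTo (n : ℕ) (h : Bool → Bool → Bool → Bool) (τ : ZMod n → ℕ) :
    ℕ → (ZMod n → Bool) → ZMod n → Bool
  | 0 => ecaStep n h τ 0
  | k + 1 => fun x => ecaStep n h τ (k + 1) (ecaUpTo n h τ k x)

/-- Asynchronous global function `f^{(τ)}` for the block-sequential update
schedule `τ : ZMod n → ℕ` (rank of each cell): a cell keeps the value it gets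
in the round where it is updated (it is never updated again afterwards). -/
def ecaAsync (n : ℕ) (h : Bool → Bool → Bool → Bool) (τ : ZMod n → ℕ)
    (x : ZMod n → Bool) : ZMod n → Bool :=
  fun i => ecaUpTo n h τ (τ i) x i

/-- Synchronous global function of the ECA with local rule `h`. -/
def ecaSync (n : ℕ) (h : Bool → Bool → Bool → Bool) (x : ZMod n → Bool) :
    ZMod n → Bool :=
  fun i => h (x (i - 1)) (x i) (x (i + 1))

/-- Label of the arc `(i, j)` for schedule `τ`:
`true` = ⊕ (τ i ≥ τ j), `false` = ⊖ (τ i < τ j). -/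
def lab (n : ℕ) (τ : ZMod n → ℕ) (i j : ZMod n) : Bool :=
  decide (τ j ≤ τ i)

/-- Length of the chain of influences to the left of cell `i`:
the largest `k ≥ 1` (it is at most `n`) such that the arcs
`(i-j, i-j+1)` are labeled ⊖ for all `0 < j < k`. -/
noncomputable def dleft (n : ℕ) (τ : ZMod n → ℕ) (i : ZMod n) : ℕ :=
  @Nat.findGreatest
    (fun k => 1 ≤ k ∧ ∀ j : ℕ, 0 < j → j < k →
      lab n τ (i - (j : ZMod n)) (i - (j : ZMod n) + 1) = false)
    (Classical.decPred _) n

/-- Length of the chain of influences to the right of cell `i`: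
the largest `k ≥ 1` (it is at most `n`) such that the arcs
`(i+j, i+j-1)` are labeled ⊖ for all `0 < j < k`. -/
noncomputable def dright (n : ℕ) (τ : ZMod n → ℕ) (i : ZMod n) : ℕ :=
  @Nat.findGreatest
    (fun k => 1 ≤ k ∧ ∀ j : ℕ, 0 < j → j < k →
      lab n τ (i + (j : ZMod n)) (i + (j : ZMod n) - 1) = false)
    (Classical.decPred _) n

/-- The set of cells the image at `i` depends on, under schedule `τ`. -/
noncomputable def dset (n : ℕ) (τ : ZMod n → ℕ) (i : ZMod n) : Set (ZMod n) :=
  {c | ∃ m : ℕ, m ≤ dleft n τ i ∧ c = i - (m : ZMod n)} ∪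
  {c | ∃ m : ℕ, m ≤ dright n τ i ∧ c = i + (m : ZMod n)}

section Aux
variable {n : ℕ}

lemma upTo_eq (τ : ZMod n → ℕ) (h : Bool → Bool → Bool → Bool) (k : ℕ)
    (x : ZMod n → Bool) (j : ZMod n) :
    ecaUpTo n h τ k x j = if τ j ≤ k then ecaAsync n h τ x j else x j := by
  induction k with
  | zero =>
      by_cases hj : τ j = 0
      · rw [if_pos (by omega)]
        show ecaStep n h τ 0 x j = _
        unfold ecaAsync
        rw [hj]
        rfl
      · rw [if_neg (by omega)]
        show ecaStep n h τ 0 x j = _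
        unfold ecaStep
        rw [if_neg hj]
  | succ k ih =>
      show ecaStep n h τ (k+1) (ecaUpTo n h τ k x) j = _
      by_cases hj : τ j = k + 1
      · rw [if_pos (by omega)]
        unfold ecaAsync
        rw [hj]
        rfl
      · unfold ecaStep
        rw [if_neg hj, ih]
        by_cases h2 : τ j ≤ k
        · rw [if_pos h2, if_pos (by omega)]
        · rw [if_neg h2, if_neg (by omega)]

lemma async_rec (τ : ZMod n → ℕ) (h : Bool → Bool → Bool → Bool)
    (x : ZMod n → Bool) (i : ZMod n) :
    ecaAsync n h τ x i =
      h (if τ (i-1) < τ i then ecaAsync n h τ x (i-1) else x (i-1))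
        (x i)
        (if τ (i+1) < τ i then ecaAsync n h τ x (i+1) else x (i+1)) := by
  conv_lhs => rw [show ecaAsync n h τ x i = ecaUpTo n h τ (τ i) x i from rfl]
  rcases hK : τ i with _ | k
  · show ecaStep n h τ 0 x i = _
    unfold ecaStep
    rw [if_pos hK]
    simp [hK]
  · show ecaStep n h τ (k+1) (ecaUpTo n h τ k x) i = _
    unfold ecaStep
    rw [if_pos hK, upTo_eq, upTo_eq, upTo_eq]
    rw [if_neg (by omega : ¬ τ i ≤ k)]
    simp only [Nat.lt_succ_iff]

end Aux

section DLR
variable {n : ℕ} (τ : ZMod n → ℕ)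

def PL (i : ZMod n) (k : ℕ) : Prop :=
  1 ≤ k ∧ ∀ j : ℕ, 0 < j → j < k →
    lab n τ (i - (j : ZMod n)) (i - (j : ZMod n) + 1) = false

def PR (i : ZMod n) (k : ℕ) : Prop :=
  1 ≤ k ∧ ∀ j : ℕ, 0 < j → j < k →
    lab n τ (i + (j : ZMod n)) (i + (j : ZMod n) - 1) = false

noncomputable local instance instPLdec (i : ZMod n) : DecidablePred (PL τ i) :=
  Classical.decPred _

noncomputable local instance instPRdec (i : ZMod n) : DecidablePred (PR τ i) :=
  Classical.decPred _

lemma dleft_eq (i : ZMod n) :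
    dleft n τ i = @Nat.findGreatest (PL τ i) (Classical.decPred _) n := rfl

lemma dright_eq (i : ZMod n) :
    dright n τ i = @Nat.findGreatest (PR τ i) (Classical.decPred _) n := rfl

lemma PL_one (i : ZMod n) : PL τ i 1 := ⟨le_refl 1, fun j hj hj' => by omega⟩
lemma PR_one (i : ZMod n) : PR τ i 1 := ⟨le_refl 1, fun j hj hj' => by omega⟩

lemma dleft_pos (hn : 1 ≤ n) (i : ZMod n) : 1 ≤ dleft n τ i := by
  rw [dleft_eq]; exact Nat.le_findGreatest hn (PL_one τ i)

lemma dright_pos (hn : 1 ≤ n) (i : ZMod n) : 1 ≤ dright n τ i := by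
  rw [dright_eq]; exact Nat.le_findGreatest hn (PR_one τ i)

lemma dleft_le (i : ZMod n) : dleft n τ i ≤ n :=
  @Nat.findGreatest_le (PL τ i) (Classical.decPred _) n

lemma dright_le (i : ZMod n) : dright n τ i ≤ n :=
  @Nat.findGreatest_le (PR τ i) (Classical.decPred _) n

lemma dleft_spec (hn : 1 ≤ n) (i : ZMod n) : PL τ i (dleft n τ i) := by
  rw [dleft_eq]; exact Nat.findGreatest_spec hn (PL_one τ i)

lemma dright_spec (hn : 1 ≤ n) (i : ZMod n) : PR τ i (dright n τ i) := by
  rw [dright_eq]; exact Nat.findGreatest_spec hn (PR_one τ i)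

lemma dleft_greatest {i : ZMod n} {k : ℕ} (h1 : dleft n τ i < k) (h2 : k ≤ n) :
    ¬ PL τ i k := by
  rw [dleft_eq] at h1; exact Nat.findGreatest_is_greatest h1 h2

lemma dright_greatest {i : ZMod n} {k : ℕ} (h1 : dright n τ i < k) (h2 : k ≤ n) :
    ¬ PR τ i k := by
  rw [dright_eq] at h1; exact Nat.findGreatest_is_greatest h1 h2

lemma lab_false_iff (a b : ZMod n) : lab n τ a b = false ↔ τ a < τ b := by
  simp [lab]

-- shift lemmas
lemma labL_shift (i : ZMod n) (j : ℕ) :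
    lab n τ (i - ((j+1 : ℕ) : ZMod n)) (i - ((j+1:ℕ):ZMod n) + 1)
      = lab n τ ((i - 1) - (j : ZMod n)) ((i-1) - (j:ZMod n) + 1) := by
  have e : ((j+1 : ℕ) : ZMod n) = (j : ZMod n) + 1 := by push_cast; ring
  rw [e, show i - ((j:ZMod n) + 1) = (i - 1) - (j : ZMod n) by ring]

lemma labR_shift (i : ZMod n) (j : ℕ) :
    lab n τ (i + ((j+1 : ℕ) : ZMod n)) (i + ((j+1:ℕ):ZMod n) - 1)
      = lab n τ ((i + 1) + (j : ZMod n)) ((i+1) + (j:ZMod n) - 1) := by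
  have e : ((j+1 : ℕ) : ZMod n) = (j : ZMod n) + 1 := by push_cast; ring
  rw [e, show i + ((j:ZMod n) + 1) = (i + 1) + (j : ZMod n) by ring]

lemma dleft_eq_one (hn : 1 ≤ n) {i : ZMod n} (hl : τ i ≤ τ (i-1)) :
    dleft n τ i = 1 := by
  refine le_antisymm ?_ (dleft_pos τ hn i)
  by_contra hc
  have h2 : 1 < dleft n τ i := by omega
  have := (dleft_spec τ hn i).2 1 one_pos h2
  rw [show ((1:ℕ) : ZMod n) = 1 by push_cast; ring, sub_add_cancel,
    lab_false_iff] at this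
  omega

lemma dright_eq_one (hn : 1 ≤ n) {i : ZMod n} (hl : τ i ≤ τ (i+1)) :
    dright n τ i = 1 := by
  refine le_antisymm ?_ (dright_pos τ hn i)
  by_contra hc
  have h2 : 1 < dright n τ i := by omega
  have := (dright_spec τ hn i).2 1 one_pos h2
  rw [show ((1:ℕ) : ZMod n) = 1 by push_cast; ring, add_sub_cancel_right,
    lab_false_iff] at this
  omega

lemma left_cycle (hn : 1 ≤ n) (i : ZMod n)
    (H : ∀ j : ℕ, j < n → τ (i - (j:ZMod n) - 1) < τ (i - (j:ZMod n))) : False := by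
  have key : ∀ m : ℕ, m ≤ n → τ (i - (m : ZMod n)) + m ≤ τ i := by
    intro m
    induction m with
    | zero => intro _; simp
    | succ m ih =>
        intro hm
        have h1 := H m (by omega)
        have h2 := ih (by omega)
        rw [show ((m+1 : ℕ) : ZMod n) = (m : ZMod n) + 1 by push_cast; ring,
          show i - ((m:ZMod n) + 1) = i - (m:ZMod n) - 1 by ring]
        omega
  have hfin := key n le_rfl
  rw [ZMod.natCast_self, sub_zero] at hfin
  omega

lemma right_cycle (hn : 1 ≤ n) (i : ZMod n)
    (H : ∀ j : ℕ, j < n → τ (i + (j:ZMod n) + 1) < τ (i + (j:ZMod n))) : False := by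
  have key : ∀ m : ℕ, m ≤ n → τ (i + (m : ZMod n)) + m ≤ τ i := by
    intro m
    induction m with
    | zero => intro _; simp
    | succ m ih =>
        intro hm
        have h1 := H m (by omega)
        have h2 := ih (by omega)
        rw [show ((m+1 : ℕ) : ZMod n) = (m : ZMod n) + 1 by push_cast; ring,
          show i + ((m:ZMod n) + 1) = i + (m:ZMod n) + 1 by ring]
        omega
  have hfin := key n le_rfl
  rw [ZMod.natCast_self, add_zero] at hfin
  omega

lemma dleft_step (hn : 1 ≤ n) {i : ZMod n} (hl : τ (i-1) < τ i) :
    dleft n τ i = dleft n τ (i-1) + 1 := by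
  set d := dleft n τ (i-1) with hd_def
  have hd := dleft_spec τ hn (i-1)
  rw [← hd_def] at hd
  have hdn : d + 1 ≤ n := by
    by_contra hcon
    have hdle := dleft_le τ (i-1)
    rw [← hd_def] at hdle
    have hdn' : d = n := by omega
    apply left_cycle τ hn i
    intro j hj
    rcases j with _ | j'
    · simpa using hl
    · have := hd.2 (j'+1) (by omega) (by omega)
      rw [labL_shift, lab_false_iff] at this
      rw [show i - ((j'+1 : ℕ) : ZMod n) = (i - 1) - ((j' : ℕ) : ZMod n) by
        push_cast; ring]
      convert this using 2 <;> ring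
  have hPL : PL τ i (d + 1) := by
    refine ⟨by omega, ?_⟩
    intro j hj hjk
    rcases j with _ | j'
    · omega
    · rcases Nat.eq_zero_or_pos j' with rfl | hj'
      · rw [show ((0+1 : ℕ) : ZMod n) = 1 by push_cast; ring, sub_add_cancel,
          lab_false_iff]
        exact hl
      · rw [labL_shift]
        exact hd.2 j' hj' (by omega)
  have hle : d + 1 ≤ dleft n τ i := by
    rw [dleft_eq]; exact Nat.le_findGreatest hdn hPL
  refine le_antisymm ?_ hle
  by_contra hcon
  have hD := dleft_spec τ hn i
  have hDle := dleft_le τ i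
  have : ¬ PL τ (i-1) (dleft n τ i - 1) :=
    dleft_greatest τ (by omega) (by omega)
  apply this
  refine ⟨by omega, ?_⟩
  intro j hj hjk
  rw [← labL_shift]
  exact hD.2 (j+1) (by omega) (by omega)

lemma dright_step (hn : 1 ≤ n) {i : ZMod n} (hl : τ (i+1) < τ i) :
    dright n τ i = dright n τ (i+1) + 1 := by
  set d := dright n τ (i+1) with hd_def
  have hd := dright_spec τ hn (i+1)
  rw [← hd_def] at hd
  have hdn : d + 1 ≤ n := by
    by_contra hcon
    have hdle := dright_le τ (i+1)
    rw [← hd_def] at hdle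
    have hdn' : d = n := by omega
    apply right_cycle τ hn i
    intro j hj
    rcases j with _ | j'
    · simpa using hl
    · have := hd.2 (j'+1) (by omega) (by omega)
      rw [labR_shift, lab_false_iff] at this
      rw [show i + ((j'+1 : ℕ) : ZMod n) = (i + 1) + ((j' : ℕ) : ZMod n) by
        push_cast; ring]
      convert this using 2 <;> ring
  have hPR : PR τ i (d + 1) := by
    refine ⟨by omega, ?_⟩
    intro j hj hjk
    rcases j with _ | j'
    · omega
    · rcases Nat.eq_zero_or_pos j' with rfl | hj'
      · rw [show ((0+1 : ℕ) : ZMod n) = 1 by push_cast; ring, add_sub_cancel_right,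
          lab_false_iff]
        exact hl
      · rw [labR_shift]
        exact hd.2 j' hj' (by omega)
  have hle : d + 1 ≤ dright n τ i := by
    rw [dright_eq]; exact Nat.le_findGreatest hdn hPR
  refine le_antisymm ?_ hle
  by_contra hcon
  have hD := dright_spec τ hn i
  have hDle := dright_le τ i
  have : ¬ PR τ (i+1) (dright n τ i - 1) :=
    dright_greatest τ (by omega) (by omega)
  apply this
  refine ⟨by omega, ?_⟩
  intro j hj hjk
  rw [← labR_shift]
  exact hD.2 (j+1) (by omega) (by omega)

end DLR

section Main
variable {n : ℕ} (τ : ZMod n → ℕ)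

def Lok (x : ZMod n → Bool) (i : ZMod n) : Prop :=
  ∀ m : ℕ, m ≤ dleft n τ i → x (i - (m : ZMod n)) = true

def Rok (x : ZMod n → Bool) (i : ZMod n) : Prop :=
  ∀ m : ℕ, m ≤ dright n τ i → x (i + (m : ZMod n)) = true

lemma Lok_self {x : ZMod n → Bool} {i : ZMod n} (H : Lok τ x i) : x i = true := by
  have := H 0 (by omega)
  simpa using this

lemma Rok_self {x : ZMod n → Bool} {i : ZMod n} (H : Rok τ x i) : x i = true := by
  have := H 0 (by omega)
  simpa using this

lemma Lok_of_ge (hn : 1 ≤ n) {x : ZMod n → Bool} {i : ZMod n}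
    (hl : τ i ≤ τ (i-1)) : Lok τ x i ↔ (x (i-1) = true ∧ x i = true) := by
  unfold Lok
  rw [dleft_eq_one τ hn hl]
  constructor
  · intro H
    refine ⟨?_, ?_⟩
    · have := H 1 le_rfl; simpa using this
    · have := H 0 (by omega); simpa using this
  · rintro ⟨h1, h0⟩ m hm
    interval_cases m
    · simpa using h0
    · simpa using h1

lemma Rok_of_ge (hn : 1 ≤ n) {x : ZMod n → Bool} {i : ZMod n}
    (hl : τ i ≤ τ (i+1)) : Rok τ x i ↔ (x (i+1) = true ∧ x i = true) := by
  unfold Rok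
  rw [dright_eq_one τ hn hl]
  constructor
  · intro H
    refine ⟨?_, ?_⟩
    · have := H 1 le_rfl; simpa using this
    · have := H 0 (by omega); simpa using this
  · rintro ⟨h1, h0⟩ m hm
    interval_cases m
    · simpa using h0
    · simpa using h1

lemma Lok_of_lt (hn : 1 ≤ n) {x : ZMod n → Bool} {i : ZMod n}
    (hl : τ (i-1) < τ i) : Lok τ x i ↔ (x i = true ∧ Lok τ x (i-1)) := by
  unfold Lok
  rw [dleft_step τ hn hl]
  constructor
  · intro H
    refine ⟨by simpa using H 0 (by omega), fun m hm => ?_⟩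
    have := H (m+1) (by omega)
    rwa [show i - ((m+1 : ℕ) : ZMod n) = (i - 1) - (m : ZMod n) by
      push_cast; ring] at this
  · rintro ⟨h0, H⟩ m hm
    rcases m with _ | m'
    · simpa using h0
    · rw [show i - ((m'+1 : ℕ) : ZMod n) = (i - 1) - (m' : ZMod n) by
        push_cast; ring]
      exact H m' (by omega)

lemma Rok_of_lt (hn : 1 ≤ n) {x : ZMod n → Bool} {i : ZMod n}
    (hl : τ (i+1) < τ i) : Rok τ x i ↔ (x i = true ∧ Rok τ x (i+1)) := by
  unfold Rok
  rw [dright_step τ hn hl]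
  constructor
  · intro H
    refine ⟨by simpa using H 0 (by omega), fun m hm => ?_⟩
    have := H (m+1) (by omega)
    rwa [show i + ((m+1 : ℕ) : ZMod n) = (i + 1) + (m : ZMod n) by
      push_cast; ring] at this
  · rintro ⟨h0, H⟩ m hm
    rcases m with _ | m'
    · simpa using h0
    · rw [show i + ((m'+1 : ℕ) : ZMod n) = (i + 1) + (m' : ZMod n) by
        push_cast; ring]
      exact H m' (by omega)

lemma core (hn : 1 ≤ n) (i : ZMod n) (x : ZMod n → Bool)
    (IH : ∀ j : ZMod n, τ j < τ i →
      (ecaAsync n (fun a b c => a && b && c) τ x j = true ↔ Lok τ x j ∧ Rok τ x j)) :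
    ecaAsync n (fun a b c => a && b && c) τ x i = true ↔ Lok τ x i ∧ Rok τ x i := by
  rw [async_rec]
  simp only [Bool.and_eq_true]
  have eL : i - 1 + 1 = i := by ring
  have eR : i + 1 - 1 = i := by ring
  by_cases hl : τ (i - 1) < τ i
  · rw [if_pos hl, IH _ hl]
    have hRprev : Rok τ x (i-1) ↔ (x i = true ∧ x (i-1) = true) := by
      rw [Rok_of_ge τ hn (by rw [eL]; omega), eL]
    rw [hRprev, Lok_of_lt τ hn hl]
    by_cases hr : τ (i + 1) < τ i
    · rw [if_pos hr, IH _ hr]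
      have hLnext : Lok τ x (i+1) ↔ (x i = true ∧ x (i+1) = true) := by
        rw [Lok_of_ge τ hn (by rw [eR]; omega), eR]
      rw [hLnext, Rok_of_lt τ hn hr]
      have z1 : Lok τ x (i-1) → x (i-1) = true := Lok_self τ
      have z2 : Rok τ x (i+1) → x (i+1) = true := Rok_self τ
      tauto
    · rw [if_neg hr, Rok_of_ge τ hn (by omega)]
      have z1 : Lok τ x (i-1) → x (i-1) = true := Lok_self τ
      tauto
  · rw [if_neg hl, Lok_of_ge τ hn (by omega)]
    by_cases hr : τ (i + 1) < τ i
    · rw [if_pos hr, IH _ hr]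
      have hLnext : Lok τ x (i+1) ↔ (x i = true ∧ x (i+1) = true) := by
        rw [Lok_of_ge τ hn (by rw [eR]; omega), eR]
      rw [hLnext, Rok_of_lt τ hn hr]
      have z2 : Rok τ x (i+1) → x (i+1) = true := Rok_self τ
      tauto
    · rw [if_neg hr, Rok_of_ge τ hn (by omega)]
      tauto

lemma main_iff (hn : 1 ≤ n) (x : ZMod n → Bool) (i : ZMod n) :
    ecaAsync n (fun a b c => a && b && c) τ x i = true ↔ Lok τ x i ∧ Rok τ x i := by
  have H : ∀ (N : ℕ) (i : ZMod n), τ i ≤ N →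
      (ecaAsync n (fun a b c => a && b && c) τ x i = true ↔ Lok τ x i ∧ Rok τ x i) := by
    intro N
    induction N with
    | zero =>
        intro i hi
        exact core τ hn i x (fun j hj => absurd hj (by omega))
    | succ N ihN =>
        intro i hi
        exact core τ hn i x (fun j hj => ihN j (by omega))
  exact H (τ i) i le_rfl

lemma dset_char (hn : 1 ≤ n) (x : ZMod n → Bool) (i : ZMod n) :
    ecaAsync n (fun a b c => a && b && c) τ x i = true ↔
      ∀ c ∈ dset n τ i, x c = true := by
  rw [main_iff τ hn]
  simp only [dset, Set.mem_union, Set.mem_setOf_eq]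
  constructor
  · rintro ⟨hL, hR⟩ c (⟨m, hm, rfl⟩ | ⟨m, hm, rfl⟩)
    · exact hL m hm
    · exact hR m hm
  · intro H
    exact ⟨fun m hm => H _ (Or.inl ⟨m, hm, rfl⟩), fun m hm => H _ (Or.inr ⟨m, hm, rfl⟩)⟩

lemma dset_subset_of_eq (hn : 1 ≤ n) (τ' : ZMod n → ℕ)
    (heq : ecaAsync n (fun a b c => a && b && c) τ =
      ecaAsync n (fun a b c => a && b && c) τ') (i : ZMod n) :
    dset n τ i ⊆ dset n τ' i := by
  intro c hc
  by_contra hc'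
  set x : ZMod n → Bool := fun j => decide (j ≠ c) with hx
  have h1 : ecaAsync n (fun a b c => a && b && c) τ x i ≠ true := by
    intro H
    rw [dset_char τ hn] at H
    have := H c hc
    simp [hx] at this
  have h2 : ecaAsync n (fun a b c => a && b && c) τ' x i = true := by
    rw [dset_char τ' hn]
    intro c' hc'mem
    have : c' ≠ c := fun h => hc' (h ▸ hc'mem)
    simp [hx, this]
  rw [heq] at h1
  exact h1 h2

end Main

/-- Rule 128 (h a b c = a ∧ b ∧ c): for non-equivalent schedules, the
dependency sets coincide at every cell iff the dynamics coincide. -/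
theorem rule_128_dset_iff (n : ℕ) (hn : 1 ≤ n) (τ τ' : ZMod n → ℕ)
    (hne : ∃ j k : ZMod n, (k = j + 1 ∨ k = j - 1) ∧ lab n τ j k ≠ lab n τ' j k) :
    (∀ i : ZMod n, dset n τ i = dset n τ' i) ↔
      ecaAsync n (fun a b c => a && b && c) τ =
        ecaAsync n (fun a b c => a && b && c) τ' := by
  constructor
  · intro hdset
    funext x i
    have h1 := dset_char τ hn x i
    have h2 := dset_char τ' hn x i
    rw [hdset i] at h1
    have h3 := h1.trans h2.symm
    exact Bool.eq_iff_iff.mpr h3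
  · intro heq i
    exact Set.Subset.antisymm (dset_subset_of_eq τ hn τ' heq i)
      (dset_subset_of_eq τ' hn τ heq.symm i)
end

section
/- For the ECA rule 128, with local rule h(a,b,c) = a ∧ b ∧ c, and for every n > 6: if τ and τ' form a special pair (i.e. lab_τ ≠ lab_τ' but f^{(τ)} = f^{(τ')}), then the labelings lab_τ and lab_τ' differ on exactly one arc of the form (i,j) with j = i±1. -/
namespace Eca128

variable {n : ℕ}

/-- Left run length: number of consecutive "increasing" edges to the left of cell `i`. -/
def lrun (τ : ZMod n → ℕ) (i : ZMod n) : ℕ :=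
  Nat.findGreatest (fun m => ∀ k : ℕ, k < m → τ (i - k - 1) < τ (i - k)) n

/-- Right run length. -/
def rrun (τ : ZMod n → ℕ) (i : ZMod n) : ℕ :=
  Nat.findGreatest (fun m => ∀ k : ℕ, k < m → τ (i + k + 1) < τ (i + k)) n

variable (τ : ZMod n → ℕ) (i : ZMod n)

lemma lrun_spec : ∀ k : ℕ, k < lrun τ i → τ (i - k - 1) < τ (i - k) :=
  Nat.findGreatest_spec (P := fun m => ∀ k : ℕ, k < m → τ (i - k - 1) < τ (i - k))
    (Nat.zero_le n) (by omega)

lemma rrun_spec : ∀ k : ℕ, k < rrun τ i → τ (i + k + 1) < τ (i + k) :=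
  Nat.findGreatest_spec (P := fun m => ∀ k : ℕ, k < m → τ (i + k + 1) < τ (i + k))
    (Nat.zero_le n) (by omega)

lemma lrun_chain : ∀ m : ℕ, m ≤ lrun τ i → τ (i - m) + m ≤ τ i := by
  intro m
  induction m with
  | zero => simp
  | succ p ih =>
    intro hp
    have h1 := lrun_spec τ i p (by omega)
    have h2 := ih (by omega)
    have : ((p+1 : ℕ) : ZMod n) = (p : ZMod n) + 1 := by push_cast; ring
    rw [this]
    have : i - ((p : ZMod n) + 1) = i - p - 1 := by ring
    rw [this]
    omega

lemma rrun_chain : ∀ m : ℕ, m ≤ rrun τ i → τ (i + m) + m ≤ τ i := by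
  intro m
  induction m with
  | zero => simp
  | succ p ih =>
    intro hp
    have h1 := rrun_spec τ i p (by omega)
    have h2 := ih (by omega)
    have : ((p+1 : ℕ) : ZMod n) = (p : ZMod n) + 1 := by push_cast; ring
    rw [this]
    have : i + ((p : ZMod n) + 1) = i + p + 1 := by ring
    rw [this]
    omega

lemma lrun_lt (hn : 0 < n) : lrun τ i < n := by
  rcases Nat.lt_or_ge (lrun τ i) n with h | h
  · exact h
  · exfalso
    have hle : lrun τ i ≤ n := Nat.findGreatest_le n
    have he : lrun τ i = n := le_antisymm hle h
    have := lrun_chain τ i n (by omega)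
    rw [show ((n : ℕ) : ZMod n) = 0 by simp] at this
    simp at this
    omega

lemma rrun_lt (hn : 0 < n) : rrun τ i < n := by
  rcases Nat.lt_or_ge (rrun τ i) n with h | h
  · exact h
  · exfalso
    have hle : rrun τ i ≤ n := Nat.findGreatest_le n
    have he : rrun τ i = n := le_antisymm hle h
    have := rrun_chain τ i n (by omega)
    rw [show ((n : ℕ) : ZMod n) = 0 by simp] at this
    simp at this
    omega

lemma lrun_pos_iff (hn : 0 < n) : 1 ≤ lrun τ i ↔ τ (i - 1) < τ i := by
  constructor
  · intro h
    have := lrun_spec τ i 0 (by omega)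
    simpa using this
  · intro h
    exact Nat.le_findGreatest (by omega) (by intro k hk; interval_cases k; simpa using h)

lemma rrun_pos_iff (hn : 0 < n) : 1 ≤ rrun τ i ↔ τ (i + 1) < τ i := by
  constructor
  · intro h
    have := rrun_spec τ i 0 (by omega)
    simpa using this
  · intro h
    exact Nat.le_findGreatest (by omega) (by intro k hk; interval_cases k; simpa using h)

lemma lrun_max (hn : 0 < n) :
    ¬ τ (i - (lrun τ i : ℕ) - 1) < τ (i - (lrun τ i : ℕ)) := by
  intro hcon
  have hbig := Nat.findGreatest_is_greatest (P := fun m => ∀ k : ℕ, k < m → τ (i - k - 1) < τ (i - k))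
    (k := lrun τ i + 1) (n := n) (by exact Nat.lt_succ_self _) (by have := lrun_lt τ i hn; omega)
  apply hbig
  intro k hk
  rcases Nat.lt_or_ge k (lrun τ i) with h | h
  · exact lrun_spec τ i k h
  · have : k = lrun τ i := by omega
    subst this; exact hcon

lemma rrun_max (hn : 0 < n) :
    ¬ τ (i + (rrun τ i : ℕ) + 1) < τ (i + (rrun τ i : ℕ)) := by
  intro hcon
  have hbig := Nat.findGreatest_is_greatest (P := fun m => ∀ k : ℕ, k < m → τ (i + k + 1) < τ (i + k))
    (k := rrun τ i + 1) (n := n) (by exact Nat.lt_succ_self _) (by have := rrun_lt τ i hn; omega)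
  apply hbig
  intro k hk
  rcases Nat.lt_or_ge k (rrun τ i) with h | h
  · exact rrun_spec τ i k h
  · have : k = rrun τ i := by omega
    subst this; exact hcon

lemma lrun_succ (hn : 0 < n) (h : τ (i - 1) < τ i) : lrun τ i = lrun τ (i - 1) + 1 := by
  apply le_antisymm
  · -- lrun i ≤ lrun (i-1) + 1, i.e. lrun i - 1 ≤ lrun (i-1): shift run
    have h1 : 1 ≤ lrun τ i := (lrun_pos_iff τ i hn).2 h
    have hrun : ∀ k : ℕ, k < lrun τ i - 1 → τ ((i-1) - k - 1) < τ ((i-1) - k) := by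
      intro k hk
      have := lrun_spec τ i (k+1) (by omega)
      have e1 : (i - 1) - (k:ℕ) = i - ((k+1:ℕ) : ZMod n) := by push_cast; ring
      have e2 : (i - 1) - (k:ℕ) - 1 = i - ((k+1:ℕ) : ZMod n) - 1 := by push_cast; ring
      rw [e2, e1]; exact this
    have := Nat.le_findGreatest (P := fun m => ∀ k : ℕ, k < m → τ ((i-1) - k - 1) < τ ((i-1) - k))
      (n := n) (m := lrun τ i - 1) (by have := lrun_lt τ i hn; omega) hrun
    have : lrun τ i - 1 ≤ lrun τ (i-1) := this
    omega
  · have hrun : ∀ k : ℕ, k < lrun τ (i-1) + 1 → τ (i - k - 1) < τ (i - k) := by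
      intro k hk
      rcases k with _ | p
      · simpa using h
      · have := lrun_spec τ (i-1) p (by omega)
        have e1 : i - ((p+1 : ℕ) : ZMod n) = (i - 1) - p := by push_cast; ring
        rw [e1]; exact this
    exact Nat.le_findGreatest (by have := lrun_lt τ (i-1) hn; omega) hrun

lemma rrun_succ (hn : 0 < n) (h : τ (i + 1) < τ i) : rrun τ i = rrun τ (i + 1) + 1 := by
  apply le_antisymm
  · have h1 : 1 ≤ rrun τ i := (rrun_pos_iff τ i hn).2 h
    have hrun : ∀ k : ℕ, k < rrun τ i - 1 → τ ((i+1) + k + 1) < τ ((i+1) + k) := by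
      intro k hk
      have := rrun_spec τ i (k+1) (by omega)
      have e1 : (i + 1) + (k:ℕ) = i + ((k+1:ℕ) : ZMod n) := by push_cast; ring
      have e2 : (i + 1) + (k:ℕ) + 1 = i + ((k+1:ℕ) : ZMod n) + 1 := by push_cast; ring
      rw [e2, e1]; exact this
    have h2 := Nat.le_findGreatest (P := fun m => ∀ k : ℕ, k < m → τ ((i+1) + k + 1) < τ ((i+1) + k))
      (n := n) (m := rrun τ i - 1) (by have := rrun_lt τ i hn; omega) hrun
    have : rrun τ i - 1 ≤ rrun τ (i+1) := h2
    omega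
  · have hrun : ∀ k : ℕ, k < rrun τ (i+1) + 1 → τ (i + k + 1) < τ (i + k) := by
      intro k hk
      rcases k with _ | p
      · simpa using h
      · have := rrun_spec τ (i+1) p (by omega)
        have e1 : i + ((p+1 : ℕ) : ZMod n) = (i + 1) + p := by push_cast; ring
        rw [e1]; exact this
    exact Nat.le_findGreatest (by have := rrun_lt τ (i+1) hn; omega) hrun

lemma lrun_zero (hn : 0 < n) (h : ¬ τ (i - 1) < τ i) : lrun τ i = 0 := by
  by_contra hc
  exact h ((lrun_pos_iff τ i hn).1 (by omega))

lemma rrun_zero (hn : 0 < n) (h : ¬ τ (i + 1) < τ i) : rrun τ i = 0 := by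
  by_contra hc
  exact h ((rrun_pos_iff τ i hn).1 (by omega))

/-- If some edge is increasing, some edge is decreasing (realizability on a cycle). -/
lemma exists_dec (hn : 0 < n) (a : ZMod n) (h : τ a < τ (a + 1)) :
    ∃ d : ZMod n, τ (d + 1) < τ d := by
  by_contra hc
  push_neg at hc
  have key : ∀ m : ℕ, τ (a + 1) ≤ τ (a + 1 + m) := by
    intro m
    induction m with
    | zero => simp
    | succ p ih =>
      have := hc (a + 1 + p)
      have e : a + 1 + ((p+1:ℕ) : ZMod n) = (a + 1 + p) + 1 := by push_cast; ring
      rw [e]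
      omega
  have := key (n - 1)
  have e : a + 1 + ((n-1:ℕ) : ZMod n) = a := by
    rw [Nat.cast_sub (by omega : 1 ≤ n), ZMod.natCast_self]
    push_cast; ring
  rw [e] at this
  omega

section Dyn
variable {n : ℕ} (h : Bool → Bool → Bool → Bool) (τ : ZMod n → ℕ) (x : ZMod n → Bool)

lemma upTo_of_rank_gt : ∀ (k : ℕ) (i : ZMod n), k < τ i → ecaUpTo n h τ k x i = x i := by
  intro k
  induction k with
  | zero =>
    intro i hi
    simp only [ecaUpTo, ecaStep]
    rw [if_neg (by omega)]
  | succ p ih =>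
    intro i hi
    simp only [ecaUpTo, ecaStep]
    rw [if_neg (by omega)]
    exact ih i (by omega)

lemma upTo_of_rank_le : ∀ (k : ℕ) (i : ZMod n), τ i ≤ k →
    ecaUpTo n h τ k x i = ecaUpTo n h τ (τ i) x i := by
  intro k
  induction k with
  | zero =>
    intro i hi
    have : τ i = 0 := by omega
    rw [this]
  | succ p ih =>
    intro i hi
    rcases Nat.lt_or_ge (τ i) (p+1) with hlt | hge
    · show ecaStep n h τ (p+1) (ecaUpTo n h τ p x) i = _
      unfold ecaStep
      rw [if_neg (by omega)]
      exact ih i (by omega)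
    · have : τ i = p + 1 := by omega
      rw [this]

lemma async_unfold (i : ZMod n) :
    ecaAsync n h τ x i =
      h (if τ (i-1) < τ i then ecaAsync n h τ x (i-1) else x (i-1)) (x i)
        (if τ (i+1) < τ i then ecaAsync n h τ x (i+1) else x (i+1)) := by
  show ecaUpTo n h τ (τ i) x i = _
  rcases hτ : τ i with _ | m
  · show ecaStep n h τ 0 x i = _
    unfold ecaStep
    rw [if_pos hτ, if_neg (by omega), if_neg (by omega)]
  · show ecaStep n h τ (m+1) (ecaUpTo n h τ m x) i = _
    unfold ecaStep
    rw [if_pos hτ]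
    rw [upTo_of_rank_gt h τ x m i (by omega)]
    rw [← hτ]
    congr 1
    · by_cases hl : τ (i-1) < τ i
      · rw [if_pos hl]
        rw [upTo_of_rank_le h τ x m (i-1) (by omega)]
        rfl
      · rw [if_neg hl]
        exact upTo_of_rank_gt h τ x m (i-1) (by omega)
    · by_cases hr : τ (i+1) < τ i
      · rw [if_pos hr]
        rw [upTo_of_rank_le h τ x m (i+1) (by omega)]
        rfl
      · rw [if_neg hr]
        exact upTo_of_rank_gt h τ x m (i+1) (by omega)

end Dyn

section Main128
variable {n : ℕ}

/-- main formula: rule-128 async value is the AND over the interval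
`[i - lrun - 1, i + rrun + 1]`. -/
lemma async128 (hn : 0 < n) (τ : ZMod n → ℕ) (x : ZMod n → Bool) (i : ZMod n) :
    ecaAsync n (fun a b c => a && b && c) τ x i = true ↔
      ((∀ k : ℕ, k ≤ lrun τ i + 1 → x (i - k) = true) ∧
       (∀ k : ℕ, k ≤ rrun τ i + 1 → x (i + k) = true)) := by
  suffices H : ∀ (N : ℕ) (i : ZMod n), τ i ≤ N →
      (ecaAsync n (fun a b c => a && b && c) τ x i = true ↔
      ((∀ k : ℕ, k ≤ lrun τ i + 1 → x (i - k) = true) ∧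
       (∀ k : ℕ, k ≤ rrun τ i + 1 → x (i + k) = true))) from H (τ i) i le_rfl
  intro N
  induction N with
  | zero =>
    intro i hi
    rw [async_unfold]
    rw [if_neg (by omega), if_neg (by omega)]
    have hl0 : lrun τ i = 0 := lrun_zero τ i hn (by omega)
    have hr0 : rrun τ i = 0 := rrun_zero τ i hn (by omega)
    rw [hl0, hr0]
    simp only [Bool.and_eq_true]
    constructor
    · rintro ⟨⟨ha, hb⟩, hc⟩
      constructor
      · intro k hk; interval_cases k
        · simpa using hb
        · simpa using ha
      · intro k hk; interval_cases k
        · simpa using hb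
        · simpa using hc
    · rintro ⟨hL, hR⟩
      refine ⟨⟨?_, ?_⟩, ?_⟩
      · simpa using hL 1 le_rfl
      · simpa using hL 0 (by omega)
      · simpa using hR 1 le_rfl
  | succ N ih =>
    intro i hi
    rcases Nat.lt_or_ge (τ i) (N+1) with hlt | hge
    · exact ih i (by omega)
    have hτi : τ i = N + 1 := by omega
    rw [async_unfold]
    simp only [Bool.and_eq_true]
    constructor
    · rintro ⟨⟨hA, hb⟩, hB⟩
      constructor
      · -- left conjunct
        intro k hk
        by_cases hl : τ (i-1) < τ i
        · rw [if_pos hl] at hA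
          have hIH := (ih (i-1) (by omega)).1 hA
          have hls : lrun τ i = lrun τ (i-1) + 1 := lrun_succ τ i hn hl
          rcases k with _ | p
          · simpa using hb
          · have := hIH.1 p (by omega)
            have e1 : (i - 1) - (p:ℕ) = i - ((p+1:ℕ) : ZMod n) := by push_cast; ring
            rw [e1] at this
            exact this
        · rw [if_neg hl] at hA
          have hl0 : lrun τ i = 0 := lrun_zero τ i hn hl
          rw [hl0] at hk
          interval_cases k
          · simpa using hb
          · simpa using hA
      · -- right conjunct
        intro k hk
        by_cases hr : τ (i+1) < τ i
        · rw [if_pos hr] at hB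
          have hIH := (ih (i+1) (by omega)).1 hB
          have hrs : rrun τ i = rrun τ (i+1) + 1 := rrun_succ τ i hn hr
          rcases k with _ | p
          · simpa using hb
          · have := hIH.2 p (by omega)
            have e1 : (i + 1) + (p:ℕ) = i + ((p+1:ℕ) : ZMod n) := by push_cast; ring
            rw [e1] at this
            exact this
        · rw [if_neg hr] at hB
          have hr0 : rrun τ i = 0 := rrun_zero τ i hn hr
          rw [hr0] at hk
          interval_cases k
          · simpa using hb
          · simpa using hB
    · rintro ⟨hL, hR⟩
      have hb : x i = true := by simpa using hL 0 (by omega)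
      refine ⟨⟨?_, hb⟩, ?_⟩
      · by_cases hl : τ (i-1) < τ i
        · rw [if_pos hl]
          apply (ih (i-1) (by omega)).2
          have hls : lrun τ i = lrun τ (i-1) + 1 := lrun_succ τ i hn hl
          have hr0 : rrun τ (i-1) = 0 := by
            apply rrun_zero τ (i-1) hn
            rw [show i - 1 + 1 = i by ring]
            omega
          constructor
          · intro p hp
            have := hL (p+1) (by omega)
            have e1 : (i - 1) - (p:ℕ) = i - ((p+1:ℕ) : ZMod n) := by push_cast; ring
            rw [e1]
            exact this
          · intro p hp
            rw [hr0] at hp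
            interval_cases p
            · simpa using hL 1 (by omega)
            · rw [show i - 1 + ((1:ℕ) : ZMod n) = i by push_cast; ring]
              exact hb
        · rw [if_neg hl]
          simpa using hL 1 (by omega)
      · by_cases hr : τ (i+1) < τ i
        · rw [if_pos hr]
          apply (ih (i+1) (by omega)).2
          have hrs : rrun τ i = rrun τ (i+1) + 1 := rrun_succ τ i hn hr
          have hl0 : lrun τ (i+1) = 0 := by
            apply lrun_zero τ (i+1) hn
            rw [show i + 1 - 1 = i by ring]
            omega
          constructor
          · intro p hp
            rw [hl0] at hp
            interval_cases p
            · simpa using hR 1 (by omega)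
            · rw [show i + 1 - ((1:ℕ) : ZMod n) = i by push_cast; ring]
              exact hb
          · intro p hp
            have := hR (p+1) (by omega)
            have e1 : (i + 1) + (p:ℕ) = i + ((p+1:ℕ) : ZMod n) := by push_cast; ring
            rw [e1]
            exact this
        · rw [if_neg hr]
          simpa using hR 1 (by omega)

end Main128
section Pm
variable {n : ℕ}

/-- membership of `j` in the dependence interval of cell `i`. -/
def Pmem (τ : ZMod n → ℕ) (i j : ZMod n) : Prop :=
  (∃ k : ℕ, k ≤ lrun τ i + 1 ∧ j = i - k) ∨ (∃ k : ℕ, k ≤ rrun τ i + 1 ∧ j = i + k)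

lemma cast_inj_lt (hn : 0 < n) {a b : ℕ} (ha : a < n) (hb : b < n)
    (h : (a : ZMod n) = b) : a = b := by
  haveI : NeZero n := ⟨by omega⟩
  rw [← ZMod.val_cast_of_lt ha, ← ZMod.val_cast_of_lt hb, h]

lemma cast_n_sub (a : ℕ) (ha : a ≤ n) : ((n - a : ℕ) : ZMod n) = - a := by
  rw [Nat.cast_sub ha, ZMod.natCast_self]; ring

lemma hp_of_heq (hn : 0 < n) (τ τ' : ZMod n → ℕ)
    (heq : ecaAsync n (fun a b c => a && b && c) τ =
      ecaAsync n (fun a b c => a && b && c) τ') :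
    ∀ i j : ZMod n, Pmem τ i j ↔ Pmem τ' i j := by
  have key : ∀ (σ : ZMod n → ℕ) (i j : ZMod n),
      Pmem σ i j ↔ ¬ (ecaAsync n (fun a b c => a && b && c) σ
        (fun c => !decide (c = j)) i = true) := by
    intro σ i j
    rw [async128 hn σ _ i]
    simp only [Bool.not_eq_true', decide_eq_false_iff_not]
    constructor
    · rintro (⟨k, hk, he⟩ | ⟨k, hk, he⟩) hcon
      · exact hcon.1 k hk he.symm
      · exact hcon.2 k hk he.symm
    · intro hcon
      by_contra hP
      exact hcon ⟨fun k hk he => hP (Or.inl ⟨k, hk, he.symm⟩),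
                  fun k hk he => hP (Or.inr ⟨k, hk, he.symm⟩)⟩
  intro i j
  rw [key τ i j, key τ' i j, heq]

lemma data_le (hn : 6 < n) (τ τ' : ZMod n → ℕ)
    (hp : ∀ i j : ZMod n, Pmem τ i j ↔ Pmem τ' i j) (i : ZMod n)
    (hsum : lrun τ i + rrun τ i ≤ n - 4) :
    lrun τ' i ≤ lrun τ i ∧ rrun τ' i ≤ rrun τ i := by
  haveI : NeZero n := ⟨by omega⟩
  set l := lrun τ i with hl
  set r := rrun τ i with hr
  constructor
  · -- use j := i - (l+2)
    have hnp : ¬ Pmem τ i (i - ((l+2 : ℕ) : ZMod n)) := by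
      rintro (⟨k, hk, he⟩ | ⟨k, hk, he⟩)
      · have hc2 : ((l+2 : ℕ) : ZMod n) = (k : ℕ) := by
          push_cast at he ⊢
          linear_combination -he
        have := cast_inj_lt (by omega) (by omega : l+2 < n) (by omega : k < n) hc2
        omega
      · have hz : ((k + (l+2) : ℕ) : ZMod n) = 0 := by
          push_cast at he ⊢
          linear_combination -he
        rw [ZMod.natCast_eq_zero_iff] at hz
        have := Nat.le_of_dvd (by omega) hz
        omega
    rw [hp] at hnp
    by_contra hc
    apply hnp
    exact Or.inl ⟨l+2, by omega, rfl⟩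
  · have hnp : ¬ Pmem τ i (i + ((r+2 : ℕ) : ZMod n)) := by
      rintro (⟨k, hk, he⟩ | ⟨k, hk, he⟩)
      · have hz : ((r+2+k : ℕ) : ZMod n) = 0 := by
          push_cast at he ⊢
          linear_combination he
        rw [ZMod.natCast_eq_zero_iff] at hz
        have := Nat.le_of_dvd (by omega) hz
        omega
      · have hc2 : ((r+2 : ℕ) : ZMod n) = (k : ℕ) := by
          push_cast at he ⊢
          linear_combination he
        have := cast_inj_lt (by omega) (by omega : r+2 < n) (by omega : k < n) hc2
        omega
    rw [hp] at hnp
    by_contra hc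
    apply hnp
    exact Or.inr ⟨r+2, by omega, rfl⟩

lemma data_or_sat (hn : 6 < n) (τ τ' : ZMod n → ℕ)
    (hp : ∀ i j : ZMod n, Pmem τ i j ↔ Pmem τ' i j) (i : ZMod n) :
    (lrun τ i = lrun τ' i ∧ rrun τ i = rrun τ' i) ∨
      (n - 3 ≤ lrun τ i + rrun τ i ∧ n - 3 ≤ lrun τ' i + rrun τ' i) := by
  have hp' : ∀ i j : ZMod n, Pmem τ' i j ↔ Pmem τ i j := fun i j => (hp i j).symm
  rcases Nat.lt_or_ge (lrun τ i + rrun τ i) (n-3) with h1 | h1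
  · have hd := data_le hn τ τ' hp i (by omega)
    have hd' := data_le hn τ' τ hp' i (by omega)
    exact Or.inl ⟨le_antisymm hd'.1 hd.1, le_antisymm hd'.2 hd.2⟩
  rcases Nat.lt_or_ge (lrun τ' i + rrun τ' i) (n-3) with h2 | h2
  · have hd := data_le hn τ' τ hp' i (by omega)
    omega
  · exact Or.inr ⟨h1, h2⟩

end Pm
section Core
variable {n : ℕ}

lemma no_GL (hn : 6 < n) (τ τ' : ZMod n → ℕ)
    (hp : ∀ i j : ZMod n, Pmem τ i j ↔ Pmem τ' i j) (e : ZMod n)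
    (hG : τ (e+1) < τ e) (hL : τ' e < τ' (e+1)) : False := by
  have h0 : 0 < n := by omega
  have hr1 : 1 ≤ rrun τ e := (rrun_pos_iff τ e h0).2 hG
  have hr'0 : rrun τ' e = 0 := rrun_zero τ' e h0 (by omega)
  have hs' : n - 3 ≤ lrun τ' e := by
    rcases data_or_sat hn τ τ' hp e with ⟨_, h2⟩ | ⟨_, h2⟩ <;> omega
  have blockA' : ∀ k : ℕ, k < n - 3 → τ' (e - k - 1) < τ' (e - k) :=
    fun k hk => lrun_spec τ' e k (by omega)
  have hl1 : lrun τ (e+1) = 0 := by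
    apply lrun_zero τ (e+1) h0
    rw [show e + 1 - 1 = e by ring]
    omega
  have hl'1 : lrun τ' (e+1) = lrun τ' e + 1 := by
    have h := lrun_succ τ' (e+1) h0 (by rw [show e + 1 - 1 = e by ring]; exact hL)
    rw [show e + 1 - 1 = e by ring] at h
    exact h
  have hs1 : n - 3 ≤ rrun τ (e+1) := by
    rcases data_or_sat hn τ τ' hp (e+1) with ⟨h2, _⟩ | ⟨h2, _⟩ <;> omega
  -- edge e+3 is G in τ
  have hG3 : τ (e + 4) < τ (e + 3) := by
    have h := rrun_spec τ (e+1) 2 (by omega)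
    rw [show e + 1 + ((2:ℕ) : ZMod n) + 1 = e + 4 by push_cast; ring] at h
    rw [show e + 1 + ((2:ℕ) : ZMod n) = e + 3 by push_cast; ring] at h
    exact h
  -- edge e+3 is L in τ'
  have hL3 : τ' (e + 3) < τ' (e + 4) := by
    have h := blockA' (n-4) (by omega)
    have e4 : e - ((n - 4 : ℕ) : ZMod n) = e + 4 := by
      rw [cast_n_sub 4 (by omega)]; push_cast; ring
    rw [show e - ((n - 4 : ℕ) : ZMod n) - 1 = e + 3 by rw [e4]; ring] at h
    rw [e4] at h
    exact h
  -- cell e+3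
  have hA : 1 ≤ rrun τ (e+3) := (rrun_pos_iff τ (e+3) h0).2
    (by rw [show e + 3 + 1 = e + 4 by ring]; exact hG3)
  have hB : rrun τ' (e+3) = 0 := rrun_zero τ' (e+3) h0
    (by rw [show e + 3 + 1 = e + 4 by ring]; omega)
  have hs3 : n - 3 ≤ lrun τ' (e+3) := by
    rcases data_or_sat hn τ τ' hp (e+3) with ⟨_, h2⟩ | ⟨_, h2⟩ <;> omega
  have blockB' : ∀ k : ℕ, k < n - 3 → τ' (e + 3 - k - 1) < τ' (e + 3 - k) :=
    fun k hk => lrun_spec τ' (e+3) k (by omega)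
  -- all edges of τ' are increasing: contradiction
  have allL : ∀ d : ZMod n, τ' d < τ' (d + 1) := by
    haveI : NeZero n := ⟨by omega⟩
    intro d
    have hk_lt : (e - d).val < n := ZMod.val_lt _
    have hd : d = e - (((e - d).val : ℕ) : ZMod n) := by
      have h := ZMod.natCast_rightInverse (n := n) (e - d)
      rw [h]; ring
    set k := (e - d).val with hkdef
    rcases Nat.lt_or_ge k (n-2) with hk1 | hk1
    · rcases Nat.eq_zero_or_pos k with hk0 | hk0
      · rw [hk0] at hd
        simp only [Nat.cast_zero, sub_zero] at hd
        rw [hd]; exact hL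
      · have h := blockA' (k-1) (by omega)
        have hc : ((k - 1 : ℕ) : ZMod n) = (k : ZMod n) - 1 := by
          push_cast [Nat.cast_sub (show 1 ≤ k by omega)]; ring
        rw [hc] at h
        rw [show e - ((k : ZMod n) - 1) - 1 = d by rw [hd]; ring] at h
        rw [show e - ((k : ZMod n) - 1) = d + 1 by rw [hd]; ring] at h
        exact h
    · rcases Nat.lt_or_ge k (n-1) with hk2 | hk2
      · -- k = n-2, d = e+2
        have hk : k = n - 2 := by omega
        have hd2 : d = e + 2 := by
          rw [hd, hk, cast_n_sub 2 (by omega)]; push_cast; ring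
        have h := blockB' 0 (by omega)
        simp only [Nat.cast_zero, sub_zero] at h
        rw [show e + 3 - 1 = d by rw [hd2]; ring] at h
        rw [show e + 3 = d + 1 by rw [hd2]; ring] at h
        exact h
      · -- k = n-1, d = e+1
        have hk : k = n - 1 := by omega
        have hd2 : d = e + 1 := by
          rw [hd, hk, cast_n_sub 1 (by omega)]; push_cast; ring
        have h := blockB' 1 (by omega)
        rw [show e + 3 - ((1:ℕ) : ZMod n) - 1 = d by rw [hd2]; push_cast; ring] at h
        rw [show e + 3 - ((1:ℕ) : ZMod n) = d + 1 by rw [hd2]; push_cast; ring] at h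
        exact h
  obtain ⟨d, hdec⟩ := exists_dec τ' h0 e hL
  exact absurd (allL d) (by omega)

end Core
section Core2
variable {n : ℕ}

/-- Structure lemma for a `>` vs `=` swap at edge `e`: all other edges agree. -/
lemma sge (hn : 6 < n) (τ τ' : ZMod n → ℕ)
    (hp : ∀ i j : ZMod n, Pmem τ i j ↔ Pmem τ' i j) (e : ZMod n)
    (hG : τ (e+1) < τ e) (hE1 : ¬ τ' (e+1) < τ' e) (hE2 : ¬ τ' e < τ' (e+1)) :
    ∀ d : ZMod n, d ≠ e →
      ((τ (d+1) < τ d ↔ τ' (d+1) < τ' d) ∧ (τ d < τ (d+1) ↔ τ' d < τ' (d+1))) := by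
  have h0 : 0 < n := by omega
  have hr1 : 1 ≤ rrun τ e := (rrun_pos_iff τ e h0).2 hG
  have hr'0 : rrun τ' e = 0 := rrun_zero τ' e h0 hE1
  have hsat_e : n - 3 ≤ lrun τ e + rrun τ e ∧ n - 3 ≤ lrun τ' e := by
    rcases data_or_sat hn τ τ' hp e with ⟨_, h2⟩ | ⟨h1, h2⟩ <;> [omega; exact ⟨h1, by omega⟩]
  obtain ⟨hsτ, hs'⟩ := hsat_e
  have blockA' : ∀ k : ℕ, k < n - 3 → τ' (e - k - 1) < τ' (e - k) :=
    fun k hk => lrun_spec τ' e k (by omega)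
  -- the edge e-1 is L in τ
  have hw1 : τ (e - 1) < τ e := by
    by_contra hnw
    have hl0 : lrun τ e = 0 := lrun_zero τ e h0 hnw
    have hrbig : n - 3 ≤ rrun τ e := by omega
    have hG3 : τ (e + 3 + 1) < τ (e + 3) := by
      have h := rrun_spec τ e 3 (by omega)
      rw [show e + ((3:ℕ) : ZMod n) + 1 = e + 3 + 1 by push_cast; ring] at h
      rw [show e + ((3:ℕ) : ZMod n) = e + 3 by push_cast; ring] at h
      exact h
    have hL3 : τ' (e + 3) < τ' (e + 3 + 1) := by
      have h := blockA' (n-4) (by omega)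
      have e4 : e - ((n - 4 : ℕ) : ZMod n) = e + 3 + 1 := by
        rw [cast_n_sub 4 (by omega)]; push_cast; ring
      rw [show e - ((n - 4 : ℕ) : ZMod n) - 1 = e + 3 by rw [e4]; ring] at h
      rw [e4] at h
      exact h
    exact no_GL hn τ τ' hp (e+3) hG3 hL3
  -- lrun τ e is large
  have hlbig : n - 3 ≤ lrun τ e := by
    by_contra hsmall
    push_neg at hsmall
    have hl_pos : 1 ≤ lrun τ e := (lrun_pos_iff τ e h0).2 hw1
    set L0 := lrun τ e with hL0
    have hwm : τ (e - (L0 : ℕ)) < τ (e - (L0 : ℕ) + 1) := by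
      have h := lrun_spec τ e (L0 - 1) (by omega)
      have hc : ((L0 - 1 : ℕ) : ZMod n) = (L0 : ZMod n) - 1 := by
        push_cast [Nat.cast_sub (show 1 ≤ L0 by omega)]; ring
      rw [hc] at h
      rw [show e - ((L0 : ZMod n) - 1) - 1 = e - (L0 : ℕ) by ring] at h
      rw [show e - ((L0 : ZMod n) - 1) = e - (L0 : ℕ) + 1 by ring] at h
      exact h
    have hrm : rrun τ (e - (L0 : ℕ)) = 0 := rrun_zero _ _ h0 (by omega)
    have hlm : lrun τ (e - (L0 : ℕ)) = 0 := by
      apply lrun_zero _ _ h0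
      have h := lrun_max τ e h0
      rw [show e - ((lrun τ e : ℕ) : ZMod n) - 1 = e - (L0:ℕ) - 1 by rw [← hL0]] at h
      rw [show e - ((lrun τ e : ℕ) : ZMod n) = e - (L0:ℕ) by rw [← hL0]] at h
      exact h
    have hdata : lrun τ' (e - (L0 : ℕ)) = 0 := by
      rcases data_or_sat hn τ τ' hp (e - (L0 : ℕ)) with ⟨h1, _⟩ | ⟨h1, _⟩ <;> omega
    have h := blockA' L0 (by omega)
    have : 1 ≤ lrun τ' (e - (L0 : ℕ)) := by
      apply (lrun_pos_iff τ' _ h0).2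
      rw [show e - (L0:ℕ) - 1 = e - ((L0:ℕ) : ZMod n) - 1 by norm_num]
      exact h
    omega
  have blockAτ : ∀ k : ℕ, k < n - 3 → τ (e - k - 1) < τ (e - k) :=
    fun k hk => lrun_spec τ e k (by omega)
  -- edge e+3 is L in both
  have hw3 : τ (e + 3) < τ (e + 3 + 1) := by
    have h := blockAτ (n-4) (by omega)
    have e4 : e - ((n - 4 : ℕ) : ZMod n) = e + 3 + 1 := by
      rw [cast_n_sub 4 (by omega)]; push_cast; ring
    rw [show e - ((n - 4 : ℕ) : ZMod n) - 1 = e + 3 by rw [e4]; ring] at h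
    rw [e4] at h
    exact h
  have hw3' : τ' (e + 3) < τ' (e + 3 + 1) := by
    have h := blockA' (n-4) (by omega)
    have e4 : e - ((n - 4 : ℕ) : ZMod n) = e + 3 + 1 := by
      rw [cast_n_sub 4 (by omega)]; push_cast; ring
    rw [show e - ((n - 4 : ℕ) : ZMod n) - 1 = e + 3 by rw [e4]; ring] at h
    rw [e4] at h
    exact h
  -- cell e+1 data
  have hre1 : rrun τ (e+1) = rrun τ' (e+1) := by
    have ha : rrun τ (e+1) ≤ 2 := by
      by_contra hc
      have h := rrun_spec τ (e+1) 2 (by omega)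
      rw [show e + 1 + ((2:ℕ) : ZMod n) + 1 = e + 3 + 1 by push_cast; ring] at h
      rw [show e + 1 + ((2:ℕ) : ZMod n) = e + 3 by push_cast; ring] at h
      omega
    have hb : rrun τ' (e+1) ≤ 2 := by
      by_contra hc
      have h := rrun_spec τ' (e+1) 2 (by omega)
      rw [show e + 1 + ((2:ℕ) : ZMod n) + 1 = e + 3 + 1 by push_cast; ring] at h
      rw [show e + 1 + ((2:ℕ) : ZMod n) = e + 3 by push_cast; ring] at h
      omega
    rcases data_or_sat hn τ τ' hp (e+1) with ⟨_, h2⟩ | ⟨h1, h2⟩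
    · exact h2
    · exfalso
      have hl1 : lrun τ (e+1) = 0 := lrun_zero τ (e+1) h0
        (by rw [show e + 1 - 1 = e by ring]; omega)
      omega
  -- cell e+2 data
  have he2 : lrun τ (e+2) = lrun τ' (e+2) ∧ rrun τ (e+2) = rrun τ' (e+2) := by
    have ha : lrun τ (e+2) ≤ 1 := by
      by_contra hc
      have h := lrun_spec τ (e+2) 1 (by omega)
      rw [show e + 2 - ((1:ℕ) : ZMod n) - 1 = e by push_cast; ring] at h
      rw [show e + 2 - ((1:ℕ) : ZMod n) = e + 1 by push_cast; ring] at h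
      omega
    have ha' : lrun τ' (e+2) ≤ 1 := by
      by_contra hc
      have h := lrun_spec τ' (e+2) 1 (by omega)
      rw [show e + 2 - ((1:ℕ) : ZMod n) - 1 = e by push_cast; ring] at h
      rw [show e + 2 - ((1:ℕ) : ZMod n) = e + 1 by push_cast; ring] at h
      exact hE2 h
    have hb : rrun τ (e+2) ≤ 1 := by
      by_contra hc
      have h := rrun_spec τ (e+2) 1 (by omega)
      rw [show e + 2 + ((1:ℕ) : ZMod n) + 1 = e + 3 + 1 by push_cast; ring] at h
      rw [show e + 2 + ((1:ℕ) : ZMod n) = e + 3 by push_cast; ring] at h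
      omega
    have hb' : rrun τ' (e+2) ≤ 1 := by
      by_contra hc
      have h := rrun_spec τ' (e+2) 1 (by omega)
      rw [show e + 2 + ((1:ℕ) : ZMod n) + 1 = e + 3 + 1 by push_cast; ring] at h
      rw [show e + 2 + ((1:ℕ) : ZMod n) = e + 3 by push_cast; ring] at h
      omega
    rcases data_or_sat hn τ τ' hp (e+2) with h | ⟨h1, h2⟩
    · exact h
    · exfalso; omega
  -- cell e+3 data
  have he3 : lrun τ (e+3) = lrun τ' (e+3) := by
    have ha : lrun τ (e+3) ≤ 2 := by
      by_contra hc
      have h := lrun_spec τ (e+3) 2 (by omega)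
      rw [show e + 3 - ((2:ℕ) : ZMod n) - 1 = e by push_cast; ring] at h
      rw [show e + 3 - ((2:ℕ) : ZMod n) = e + 1 by push_cast; ring] at h
      omega
    have ha' : lrun τ' (e+3) ≤ 2 := by
      by_contra hc
      have h := lrun_spec τ' (e+3) 2 (by omega)
      rw [show e + 3 - ((2:ℕ) : ZMod n) - 1 = e by push_cast; ring] at h
      rw [show e + 3 - ((2:ℕ) : ZMod n) = e + 1 by push_cast; ring] at h
      exact hE2 h
    have hb : rrun τ (e+3) = 0 := rrun_zero _ _ h0 (by omega)
    have hb' : rrun τ' (e+3) = 0 := rrun_zero _ _ h0 (by omega)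
    rcases data_or_sat hn τ τ' hp (e+3) with ⟨h1, _⟩ | ⟨h1, h2⟩
    · exact h1
    · exfalso; omega
  -- now conclude for every d ≠ e
  haveI : NeZero n := ⟨by omega⟩
  intro d hd
  have hk_lt : (e - d).val < n := ZMod.val_lt _
  have hdk : d = e - (((e - d).val : ℕ) : ZMod n) := by
    have h := ZMod.natCast_rightInverse (n := n) (e - d)
    rw [h]; ring
  set k := (e - d).val with hkdef
  have hk0 : k ≠ 0 := by
    intro h
    apply hd
    rw [hdk, h]
    simp
  rcases Nat.lt_or_ge k (n-2) with hk1 | hk1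
  · -- 1 ≤ k ≤ n-3 : edge d is L in both
    have hLd : τ d < τ (d+1) := by
      have h := blockAτ (k-1) (by omega)
      have hc : ((k - 1 : ℕ) : ZMod n) = (k : ZMod n) - 1 := by
        push_cast [Nat.cast_sub (show 1 ≤ k by omega)]; ring
      rw [hc] at h
      rw [show e - ((k : ZMod n) - 1) - 1 = d by rw [hdk]; ring] at h
      rw [show e - ((k : ZMod n) - 1) = d + 1 by rw [hdk]; ring] at h
      exact h
    have hLd' : τ' d < τ' (d+1) := by
      have h := blockA' (k-1) (by omega)
      have hc : ((k - 1 : ℕ) : ZMod n) = (k : ZMod n) - 1 := by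
        push_cast [Nat.cast_sub (show 1 ≤ k by omega)]; ring
      rw [hc] at h
      rw [show e - ((k : ZMod n) - 1) - 1 = d by rw [hdk]; ring] at h
      rw [show e - ((k : ZMod n) - 1) = d + 1 by rw [hdk]; ring] at h
      exact h
    exact ⟨by omega, by omega⟩
  · rcases Nat.lt_or_ge k (n-1) with hk2 | hk2
    · -- k = n-2, d = e+2
      have hd2 : d = e + 2 := by
        rw [hdk, show k = n - 2 by omega, cast_n_sub 2 (by omega)]; push_cast; ring
      subst hd2
      constructor
      · have g1 := rrun_pos_iff τ (e+2) h0
        have g2 := rrun_pos_iff τ' (e+2) h0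
        rw [show e + 2 + 1 = e + 2 + 1 by ring] at g1
        omega
      · have g1 := lrun_pos_iff τ (e+3) h0
        have g2 := lrun_pos_iff τ' (e+3) h0
        rw [show e + 3 - 1 = e + 2 by ring] at g1 g2
        have e31 : e + 2 + 1 = e + 3 := by ring
        rw [e31]
        omega
    · -- k = n-1, d = e+1
      have hd2 : d = e + 1 := by
        rw [hdk, show k = n - 1 by omega, cast_n_sub 1 (by omega)]; push_cast; ring
      subst hd2
      constructor
      · have g1 := rrun_pos_iff τ (e+1) h0
        have g2 := rrun_pos_iff τ' (e+1) h0
        omega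
      · have g1 := lrun_pos_iff τ (e+2) h0
        have g2 := lrun_pos_iff τ' (e+2) h0
        rw [show e + 2 - 1 = e + 1 by ring] at g1 g2
        have e21 : e + 1 + 1 = e + 2 := by ring
        rw [e21]
        omega

end Core2
section Mirror
variable {n : ℕ}

lemma lrun_mu (τ : ZMod n → ℕ) (i : ZMod n) :
    lrun (fun c => τ (-c)) i = rrun τ (-i) := by
  apply le_antisymm
  · apply Nat.le_findGreatest (Nat.findGreatest_le n)
    intro k hk
    have h : τ (-(i - (k:ZMod n) - 1)) < τ (-(i - (k:ZMod n))) :=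
      lrun_spec (fun c => τ (-c)) i k hk
    rw [show -(i - (k:ZMod n) - 1) = -i + k + 1 by ring,
        show -(i - (k:ZMod n)) = -i + k by ring] at h
    exact h
  · apply Nat.le_findGreatest (Nat.findGreatest_le n)
    intro k hk
    have h := rrun_spec τ (-i) k hk
    show τ (-(i - (k:ZMod n) - 1)) < τ (-(i - (k:ZMod n)))
    rw [show -(i - (k:ZMod n) - 1) = -i + k + 1 by ring,
        show -(i - (k:ZMod n)) = -i + k by ring]
    exact h

lemma rrun_mu (τ : ZMod n → ℕ) (i : ZMod n) :
    rrun (fun c => τ (-c)) i = lrun τ (-i) := by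
  apply le_antisymm
  · apply Nat.le_findGreatest (Nat.findGreatest_le n)
    intro k hk
    have h : τ (-(i + (k:ZMod n) + 1)) < τ (-(i + (k:ZMod n))) :=
      rrun_spec (fun c => τ (-c)) i k hk
    rw [show -(i + (k:ZMod n) + 1) = -i - k - 1 by ring,
        show -(i + (k:ZMod n)) = -i - k by ring] at h
    exact h
  · apply Nat.le_findGreatest (Nat.findGreatest_le n)
    intro k hk
    have h := lrun_spec τ (-i) k hk
    show τ (-(i + (k:ZMod n) + 1)) < τ (-(i + (k:ZMod n)))
    rw [show -(i + (k:ZMod n) + 1) = -i - k - 1 by ring,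
        show -(i + (k:ZMod n)) = -i - k by ring]
    exact h

lemma pmem_mu (τ : ZMod n → ℕ) (i j : ZMod n) :
    Pmem (fun c => τ (-c)) i j ↔ Pmem τ (-i) (-j) := by
  unfold Pmem
  rw [lrun_mu, rrun_mu]
  constructor
  · rintro (⟨k, hk, he⟩ | ⟨k, hk, he⟩)
    · exact Or.inr ⟨k, hk, by rw [he]; ring⟩
    · exact Or.inl ⟨k, hk, by rw [he]; ring⟩
  · rintro (⟨k, hk, he⟩ | ⟨k, hk, he⟩)
    · exact Or.inr ⟨k, hk, by linear_combination -he⟩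
    · exact Or.inl ⟨k, hk, by linear_combination -he⟩

/-- Structure lemma for a `<` vs `=` swap at edge `e`. -/
lemma sle (hn : 6 < n) (τ τ' : ZMod n → ℕ)
    (hp : ∀ i j : ZMod n, Pmem τ i j ↔ Pmem τ' i j) (e : ZMod n)
    (hL : τ e < τ (e+1)) (hE1 : ¬ τ' e < τ' (e+1)) (hE2 : ¬ τ' (e+1) < τ' e) :
    ∀ d : ZMod n, d ≠ e →
      ((τ (d+1) < τ d ↔ τ' (d+1) < τ' d) ∧ (τ d < τ (d+1) ↔ τ' d < τ' (d+1))) := by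
  have hp_mu : ∀ i j : ZMod n, Pmem (fun c => τ (-c)) i j ↔ Pmem (fun c => τ' (-c)) i j :=
    fun i j => (pmem_mu τ i j).trans ((hp (-i) (-j)).trans (pmem_mu τ' i j).symm)
  have hG' : (fun c => τ (-c)) (-e-1+1) < (fun c => τ (-c)) (-e-1) := by
    show τ (-(-e-1+1)) < τ (-(-e-1))
    rw [show -(-e-1+1) = e by ring, show -(-e-1) = e + 1 by ring]
    exact hL
  have hE1' : ¬ (fun c => τ' (-c)) (-e-1+1) < (fun c => τ' (-c)) (-e-1) := by
    show ¬ τ' (-(-e-1+1)) < τ' (-(-e-1))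
    rw [show -(-e-1+1) = e by ring, show -(-e-1) = e + 1 by ring]
    exact hE1
  have hE2' : ¬ (fun c => τ' (-c)) (-e-1) < (fun c => τ' (-c)) (-e-1+1) := by
    show ¬ τ' (-(-e-1)) < τ' (-(-e-1+1))
    rw [show -(-e-1+1) = e by ring, show -(-e-1) = e + 1 by ring]
    exact hE2
  have Hall := sge hn (fun c => τ (-c)) (fun c => τ' (-c)) hp_mu (-e-1) hG' hE1' hE2'
  intro d hd
  have hne : (-d-1 : ZMod n) ≠ -e-1 := by
    intro h
    exact hd (by linear_combination -h)
  have H : ((τ (-(-d-1+1)) < τ (-(-d-1)) ↔ τ' (-(-d-1+1)) < τ' (-(-d-1))) ∧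
            (τ (-(-d-1)) < τ (-(-d-1+1)) ↔ τ' (-(-d-1)) < τ' (-(-d-1+1)))) :=
    Hall (-d-1) hne
  rw [show -(-d-1+1) = d by ring, show -(-d-1) = d + 1 by ring] at H
  exact ⟨H.2, H.1⟩

end Mirror
section Finish
variable {n : ℕ}

lemma finishGE (hn : 6 < n) (τ τ' : ZMod n → ℕ)
    (hp : ∀ i j : ZMod n, Pmem τ i j ↔ Pmem τ' i j) (e : ZMod n)
    (hG : τ (e+1) < τ e) (hE1 : ¬ τ' (e+1) < τ' e) (hE2 : ¬ τ' e < τ' (e+1)) :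
    ∃! p : ZMod n × ZMod n,
      (p.2 = p.1 + 1 ∨ p.2 = p.1 - 1) ∧ lab n τ p.1 p.2 ≠ lab n τ' p.1 p.2 := by
  have hsge := sge hn τ τ' hp e hG hE1 hE2
  refine ⟨(e+1, e), ⟨Or.inr (by ring), ?_⟩, ?_⟩
  · simp only [lab, ne_eq, decide_eq_decide]
    omega
  · rintro ⟨q1, q2⟩ ⟨hq | hq, hlab⟩
    · exfalso
      simp only at hq
      subst hq
      simp only [lab, ne_eq, decide_eq_decide] at hlab
      by_cases hq1 : q1 = e
      · subst hq1; omega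
      · have := hsge q1 hq1
        omega
    · simp only at hq
      subst hq
      simp only [lab, ne_eq, decide_eq_decide] at hlab
      by_cases hq1 : q1 - 1 = e
      · have h2 : q1 = e + 1 := by rw [← hq1]; ring
        rw [Prod.mk.injEq]
        exact ⟨h2, hq1⟩
      · exfalso
        have H := hsge (q1-1) hq1
        rw [show q1 - 1 + 1 = q1 by ring] at H
        omega

lemma finishLE (hn : 6 < n) (τ τ' : ZMod n → ℕ)
    (hp : ∀ i j : ZMod n, Pmem τ i j ↔ Pmem τ' i j) (e : ZMod n)
    (hL : τ e < τ (e+1)) (hE1 : ¬ τ' e < τ' (e+1)) (hE2 : ¬ τ' (e+1) < τ' e) :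
    ∃! p : ZMod n × ZMod n,
      (p.2 = p.1 + 1 ∨ p.2 = p.1 - 1) ∧ lab n τ p.1 p.2 ≠ lab n τ' p.1 p.2 := by
  have hsle := sle hn τ τ' hp e hL hE1 hE2
  refine ⟨(e, e+1), ⟨Or.inl rfl, ?_⟩, ?_⟩
  · simp only [lab, ne_eq, decide_eq_decide]
    omega
  · rintro ⟨q1, q2⟩ ⟨hq | hq, hlab⟩
    · simp only at hq
      subst hq
      simp only [lab, ne_eq, decide_eq_decide] at hlab
      by_cases hq1 : q1 = e
      · subst hq1; rfl
      · exfalso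
        have := hsle q1 hq1
        omega
    · exfalso
      simp only at hq
      subst hq
      simp only [lab, ne_eq, decide_eq_decide] at hlab
      by_cases hq1 : q1 - 1 = e
      · have h2 : q1 = e + 1 := by rw [← hq1]; ring
        rw [hq1, h2] at hlab
        omega
      · have H := hsle (q1-1) hq1
        rw [show q1 - 1 + 1 = q1 by ring] at H
        omega

lemma flipEU {τ τ' : ZMod n → ℕ}
    (h : ∃! p : ZMod n × ZMod n,
      (p.2 = p.1 + 1 ∨ p.2 = p.1 - 1) ∧ lab n τ' p.1 p.2 ≠ lab n τ p.1 p.2) :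
    ∃! p : ZMod n × ZMod n,
      (p.2 = p.1 + 1 ∨ p.2 = p.1 - 1) ∧ lab n τ p.1 p.2 ≠ lab n τ' p.1 p.2 := by
  obtain ⟨p, ⟨h1, h2⟩, h3⟩ := h
  exact ⟨p, ⟨h1, Ne.symm h2⟩, fun q hq => h3 q ⟨hq.1, Ne.symm hq.2⟩⟩

end Finish

end Eca128

/-- Rule 128: a special pair (non-equivalent schedules with the same dynamics)
differs on the labeling of exactly one arc. -/
theorem rule_128_special_pair_one_arc (n : ℕ) (hn : 6 < n) (τ τ' : ZMod n → ℕ)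
    (hne : ∃ j k : ZMod n, (k = j + 1 ∨ k = j - 1) ∧ lab n τ j k ≠ lab n τ' j k)
    (heq : ecaAsync n (fun a b c => a && b && c) τ =
      ecaAsync n (fun a b c => a && b && c) τ') :
    ∃! p : ZMod n × ZMod n,
      (p.2 = p.1 + 1 ∨ p.2 = p.1 - 1) ∧ lab n τ p.1 p.2 ≠ lab n τ' p.1 p.2 := by
  have hp := Eca128.hp_of_heq (show 0 < n by omega) τ τ' heq
  have hp' : ∀ i j : ZMod n, Eca128.Pmem τ' i j ↔ Eca128.Pmem τ i j :=
    fun i j => (hp i j).symm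
  obtain ⟨j, k, hjk, hlabne⟩ := hne
  have hmm : ∃ e : ZMod n,
      ¬ ((τ (e+1) < τ e ↔ τ' (e+1) < τ' e) ∧ (τ e < τ (e+1) ↔ τ' e < τ' (e+1))) := by
    rcases hjk with h | h
    · subst h
      refine ⟨j, ?_⟩
      simp only [lab, ne_eq, decide_eq_decide] at hlabne
      omega
    · subst h
      refine ⟨j - 1, ?_⟩
      simp only [lab, ne_eq, decide_eq_decide] at hlabne
      rw [show j - 1 + 1 = j by ring]
      omega
  obtain ⟨e, hmm⟩ := hmm
  rcases Nat.lt_trichotomy (τ e) (τ (e+1)) with hL | hE | hG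
  · rcases Nat.lt_trichotomy (τ' e) (τ' (e+1)) with hL' | hE' | hG'
    · exact absurd ⟨by omega, by omega⟩ hmm
    · exact Eca128.finishLE hn τ τ' hp e hL (by omega) (by omega)
    · exact (Eca128.no_GL hn τ' τ hp' e hG' hL).elim
  · rcases Nat.lt_trichotomy (τ' e) (τ' (e+1)) with hL' | hE' | hG'
    · exact Eca128.flipEU (Eca128.finishLE hn τ' τ hp' e hL' (by omega) (by omega))
    · exact absurd ⟨by omega, by omega⟩ hmm
    · exact Eca128.flipEU (Eca128.finishGE hn τ' τ hp' e hG' (by omega) (by omega))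
  · rcases Nat.lt_trichotomy (τ' e) (τ' (e+1)) with hL' | hE' | hG'
    · exact (Eca128.no_GL hn τ τ' hp e hG hL').elim
    · exact Eca128.finishGE hn τ τ' hp e hG (by omega) (by omega)
    · exact absurd ⟨by omega, by omega⟩ hmm
end

section
/- For the ECA rule 162, with local rule h(a,b,c) = (a ∨ ¬b) ∧ c, and for every n ≥ 2: if τ and τ' form a special pair (i.e. lab_τ ≠ lab_τ' but f^{(τ)} = f^{(τ')}), then lab_τ((i+1,i)) = lab_τ'((i+1,i)) for every cell i ∈ ℤ/nℤ. -/
lemma upTo_stable (n : ℕ) (h : Bool → Bool → Bool → Bool) (τ : ZMod n → ℕ)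
    (x : ZMod n → Bool) (j : ZMod n) :
    ∀ k, k < τ j → ecaUpTo n h τ k x j = x j := by
  intro k
  induction k with
  | zero => intro hk; simp [ecaUpTo, ecaStep]; omega
  | succ k ih =>
    intro hk
    have h1 : τ j ≠ k + 1 := by omega
    simp [ecaUpTo, ecaStep, h1]
    exact ih (by omega)

lemma upTo_frozen (n : ℕ) (h : Bool → Bool → Bool → Bool) (τ : ZMod n → ℕ)
    (x : ZMod n → Bool) (j : ZMod n) :
    ∀ k, τ j ≤ k → ecaUpTo n h τ k x j = ecaUpTo n h τ (τ j) x j := by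
  intro k
  induction k with
  | zero => intro hk; rw [Nat.le_zero.mp hk]
  | succ k ih =>
    intro hk
    rcases Nat.lt_or_ge (τ j) (k+1) with hlt | hge
    · have h1 : τ j ≠ k + 1 := by omega
      show ecaStep n h τ (k+1) (ecaUpTo n h τ k x) j = _
      simp [ecaStep, h1]
      exact ih (by omega)
    · have : τ j = k + 1 := by omega
      rw [this]

lemma key_lemma (n : ℕ) (hn : 2 ≤ n) (τ : ZMod n → ℕ) (i : ZMod n) :
    ecaAsync n (fun a b c => (a || !b) && c) τ (fun j => decide (j ≠ i)) i
      = decide (τ i ≤ τ (i + 1)) := by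
  haveI : Fact (1 < n) := ⟨hn⟩
  have hne1 : i + 1 ≠ i := by
    intro hcon
    have : (1 : ZMod n) = 0 := by
      have := congrArg (fun z => z - i) hcon
      simpa using this
    exact one_ne_zero this
  set x : ZMod n → Bool := fun j => decide (j ≠ i) with hx
  have hxi : x i = false := by simp [hx]
  have hxi1 : x (i + 1) = true := by simp [hx, hne1]
  have hsub : i + 1 - 1 = i := by ring
  show ecaUpTo n _ τ (τ i) x i = _
  rcases Nat.eq_zero_or_pos (τ i) with h0 | hpos
  · rw [h0]
    simp [ecaUpTo, ecaStep, h0, hxi, hxi1]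
  · obtain ⟨m, hm⟩ : ∃ m, τ i = m + 1 := ⟨τ i - 1, by omega⟩
    rw [hm]
    show ecaStep n (fun a b c => (a || !b) && c) τ (m+1)
      (ecaUpTo n (fun a b c => (a || !b) && c) τ m x) i = decide (m + 1 ≤ τ (i+1))
    have hPi : ecaUpTo n (fun a b c => (a || !b) && c) τ m x i = false := by
      rw [upTo_stable n _ τ x i m (by omega), hxi]
    simp only [ecaStep, hm, if_pos rfl, hPi]
    simp only [Bool.not_false, Bool.or_true, Bool.true_and, if_true]
    rcases Nat.lt_or_ge (τ (i+1)) (τ i) with hlt | hge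
    · -- i+1 updated strictly before i; its new value is false
      have hd : decide (m + 1 ≤ τ (i+1)) = false := by simp; omega
      rw [hd]
      rw [upTo_frozen n _ τ x (i+1) m (by omega)]
      rcases Nat.eq_zero_or_pos (τ (i+1)) with h0' | hpos'
      · rw [h0']
        simp [ecaUpTo, ecaStep, h0', hsub, hxi, hxi1]
      · obtain ⟨m', hm'⟩ : ∃ m', τ (i+1) = m' + 1 := ⟨τ (i+1) - 1, by omega⟩
        rw [hm']
        show ecaStep n (fun a b c => (a || !b) && c) τ (m'+1)
          (ecaUpTo n (fun a b c => (a || !b) && c) τ m' x) (i+1) = false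
        have hQi : ecaUpTo n (fun a b c => (a || !b) && c) τ m' x i = false := by
          rw [upTo_stable n _ τ x i m' (by omega), hxi]
        have hQi1 : ecaUpTo n (fun a b c => (a || !b) && c) τ m' x (i+1) = true := by
          rw [upTo_stable n _ τ x (i+1) m' (by omega), hxi1]
        simp [ecaStep, hm', hsub, hQi, hQi1]
    · -- i+1 not yet updated at time τ i
      have hd : decide (m + 1 ≤ τ (i+1)) = true := by simp; omega
      rw [hd, upTo_stable n _ τ x (i+1) m (by omega), hxi1]

/-- Rule 162 (h a b c = (a ∨ ¬b) ∧ c): schedules of a special pair agree on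
the labels of all arcs $(i+1,i)$. -/
theorem rule_162_special_pair_counterclockwise (n : ℕ) (hn : 2 ≤ n)
    (τ τ' : ZMod n → ℕ)
    (hne : ∃ j k : ZMod n, (k = j + 1 ∨ k = j - 1) ∧ lab n τ j k ≠ lab n τ' j k)
    (heq : ecaAsync n (fun a b c => (a || !b) && c) τ =
      ecaAsync n (fun a b c => (a || !b) && c) τ') :
    ∀ i : ZMod n, lab n τ (i + 1) i = lab n τ' (i + 1) i := by
  intro i
  have h1 := key_lemma n hn τ i
  have h2 := key_lemma n hn τ' i
  unfold lab
  rw [← h1, ← h2, heq]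
end

section
/- For the ECA rule 162, with local rule h(a,b,c) = (a ∨ ¬b) ∧ c, and for every n ≥ 3: the number of distinct asynchronous global functions, i.e. the cardinality of { f^{(τ)} : τ a block-sequential update schedule on ℤ/nℤ }, equals 3^n − 2^{n+1} − n + 2. -/
namespace R162
variable {n : ℕ}

theorem upTo_gt (h : Bool → Bool → Bool → Bool) (τ : ZMod n → ℕ) (x : ZMod n → Bool)
    (k : ℕ) (j : ZMod n) (hk : k < τ j) : ecaUpTo n h τ k x j = x j := by
  induction k with
  | zero => simp [ecaUpTo, ecaStep]; omega
  | succ k ih =>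
    simp only [ecaUpTo, ecaStep]
    rw [if_neg (by omega), ih (by omega)]

theorem upTo_le (h : Bool → Bool → Bool → Bool) (τ : ZMod n → ℕ) (x : ZMod n → Bool)
    (k : ℕ) (j : ZMod n) (hk : τ j ≤ k) : ecaUpTo n h τ k x j = ecaUpTo n h τ (τ j) x j := by
  induction k with
  | zero =>
    have h1 : τ j = 0 := by omega
    rw [h1]
  | succ k ih =>
    rcases Nat.eq_or_lt_of_le hk with h1 | h1
    · rw [h1]
    · have h2 : τ j ≤ k := by omega
      rw [← ih h2]
      simp only [ecaUpTo, ecaStep]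
      rw [if_neg (by omega)]

theorem async_rec (h : Bool → Bool → Bool → Bool) (τ : ZMod n → ℕ) (x : ZMod n → Bool)
    (i : ZMod n) :
    ecaAsync n h τ x i =
      h (if τ (i-1) < τ i then ecaAsync n h τ x (i-1) else x (i-1)) (x i)
        (if τ (i+1) < τ i then ecaAsync n h τ x (i+1) else x (i+1)) := by
  unfold ecaAsync
  by_cases h0 : τ i = 0
  · rw [h0]
    simp only [ecaUpTo, ecaStep]
    rw [if_pos h0]
    rw [if_neg (by omega), if_neg (by omega)]
  · obtain ⟨m, hm⟩ := Nat.exists_eq_succ_of_ne_zero h0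
    rw [hm]
    simp only [ecaUpTo, ecaStep]
    rw [if_pos hm]
    have hx : ecaUpTo n h τ m x i = x i := upTo_gt h τ x _ i (by omega)
    rw [hx]
    congr 1
    · by_cases hl : τ (i-1) < τ i
      · rw [if_pos (hm ▸ hl), upTo_le h τ x _ _ (by omega)]
      · rw [if_neg (hm ▸ hl), upTo_gt h τ x _ _ (by omega)]
    · by_cases hr : τ (i+1) < τ i
      · rw [if_pos (hm ▸ hr), upTo_le h τ x _ _ (by omega)]
      · rw [if_neg (hm ▸ hr), upTo_gt h τ x _ _ (by omega)]

set_option linter.unusedSectionVars false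
def rule : Bool → Bool → Bool → Bool := fun a b c => (a || !b) && c


def P (x : ZMod n → Bool) : ZMod n → ℕ → Bool
  | i, 0 => x (i-1) || !x i
  | i, l+1 => P x (i-1) l || !x i

def C (x : ZMod n → Bool) : ZMod n → ℕ → Bool
  | i, 0 => x (i+1)
  | i, r+1 => (x i || !x (i+1)) && C x (i+1) r

lemma shiftL (i : ZMod n) (j : ℕ) : i - (↑(j+1) : ZMod n) = (i - 1) - (j : ZMod n) := by
  push_cast; ring

lemma shiftR (i : ZMod n) (j : ℕ) : i + (↑(j+1) : ZMod n) = (i + 1) + (j : ZMod n) := by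
  push_cast; ring

theorem async_formula (τ : ZMod n → ℕ) :
    ∀ (M : ℕ) (i : ZMod n), τ i ≤ M → ∀ (x : ZMod n → Bool) (l r : ℕ),
    (∀ j : ℕ, j < l → τ (i - (j : ZMod n) - 1) < τ (i - (j : ZMod n))) →
    ¬ τ (i - (l : ZMod n) - 1) < τ (i - (l : ZMod n)) →
    (∀ j : ℕ, j < r → τ (i + (j : ZMod n) + 1) < τ (i + (j : ZMod n))) →
    ¬ τ (i + (r : ZMod n) + 1) < τ (i + (r : ZMod n)) →
    ecaAsync n rule τ x i = (P x i l && C x i r) := by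
  intro M
  induction M with
  | zero =>
    intro i hi x l r hl hl' hr hr'
    have hi0 : τ i = 0 := by omega
    have hl0 : l = 0 := by
      rcases l with _ | l'; · rfl
      · exact absurd (by simpa using hl 0 (by omega)) (by omega)
    have hr0 : r = 0 := by
      rcases r with _ | r'; · rfl
      · exact absurd (by simpa using hr 0 (by omega)) (by omega)
    subst hl0; subst hr0
    rw [async_rec, if_neg (by omega), if_neg (by omega)]
    rfl
  | succ M ih =>
    intro i hi x l r hl hl' hr hr'
    rw [async_rec]
    have hA : ((if τ (i-1) < τ i then ecaAsync n rule τ x (i-1) else x (i-1)) || !x i)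
        = P x i l := by
      by_cases hL : τ (i-1) < τ i
      · rcases l with _ | l'
        · exact absurd hL (by simpa using hl')
        · rw [if_pos hL]
          have e1 : ecaAsync n rule τ x (i-1) = (P x (i-1) l' && C x (i-1) 0) := by
            apply ih (i-1) (by omega) x l' 0
            · intro j hj
              have := hl (j+1) (by omega)
              rwa [shiftL] at this
            · have := hl'
              rwa [shiftL] at this
            · intro j hj; omega
            · simp only [Nat.cast_zero, add_zero, sub_add_cancel]
              omega
          rw [e1]
          show ((P x (i-1) l' && C x (i-1) 0) || !x i) = (P x (i-1) l' || !x i)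
          have : C x (i-1) 0 = x i := by
            show x (i - 1 + 1) = x i
            rw [sub_add_cancel]
          rw [this]
          cases x i <;> simp
      · rw [if_neg hL]
        have hl0 : l = 0 := by
          rcases l with _ | l'; · rfl
          · exact absurd (by simpa using hl 0 (by omega)) hL
        subst hl0
        rfl
    have hC : (if τ (i+1) < τ i then ecaAsync n rule τ x (i+1) else x (i+1))
        = C x i r := by
      by_cases hR : τ (i+1) < τ i
      · rcases r with _ | r'
        · exact absurd hR (by simpa using hr')
        · rw [if_pos hR]
          have e1 : ecaAsync n rule τ x (i+1) = (P x (i+1) 0 && C x (i+1) r') := by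
            apply ih (i+1) (by omega) x 0 r'
            · intro j hj; omega
            · simp only [Nat.cast_zero, sub_zero, add_sub_cancel_right]
              omega
            · intro j hj
              have := hr (j+1) (by omega)
              rwa [shiftR] at this
            · have := hr'
              rwa [shiftR] at this
          rw [e1]
          show (P x (i+1) 0 && C x (i+1) r') = ((x i || !x (i+1)) && C x (i+1) r')
          congr 1
          show (x (i+1-1) || !x (i+1)) = (x i || !x (i+1))
          rw [add_sub_cancel_right]
      · rw [if_neg hR]
        have hr0 : r = 0 := by
          rcases r with _ | r'; · rfl
          · exact absurd (by simpa using hr 0 (by omega)) hR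
        subst hr0
        rfl
    rw [hC, ← hA]
    rfl

section Runs
variable {n : ℕ} [NeZero n]


lemma cast_val (a : ZMod n) : ((a.val : ℕ) : ZMod n) = a :=
  (ZMod.natCast_val a).trans (ZMod.cast_id _ _)

lemma castval_lt (a : ZMod n) : a.val < n := ZMod.val_lt a

lemma cast_nsub_one (hn : 1 ≤ n) : (((n - 1 : ℕ)) : ZMod n) = -1 := by
  have : ((n : ℕ) : ZMod n) = 0 := ZMod.natCast_self n
  push_cast [Nat.cast_sub hn]
  rw [this]; ring

lemma val_eq_iff (a : ZMod n) (m : ℕ) (hm : m < n) : a.val = m ↔ a = (m : ZMod n) := by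
  constructor
  · intro h; rw [← cast_val a, h]
  · intro h; rw [h, ZMod.val_cast_of_lt hm]

def sig (τ : ZMod n → ℕ) (e : ZMod n) : Ordering :=
  if τ e < τ (e + 1) then .lt else if τ (e + 1) < τ e then .gt else .eq

lemma sig_lt_iff (τ : ZMod n → ℕ) (e : ZMod n) : sig τ e = .lt ↔ τ e < τ (e + 1) := by
  unfold sig; split_ifs <;> simp_all

lemma sig_gt_iff (τ : ZMod n → ℕ) (e : ZMod n) : sig τ e = .gt ↔ τ (e + 1) < τ e := by
  unfold sig; split_ifs <;> simp_all <;> omega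

lemma ord_eq_of (o : Ordering) (h1 : o ≠ .lt) (h2 : o ≠ .gt) : o = .eq := by
  cases o <;> simp_all

def Feas (n : ℕ) : Set (ZMod n → Ordering) :=
  {σ | (∀ e, σ e = .eq) ∨ ((∃ e, σ e = .lt) ∧ (∃ e, σ e = .gt))}

lemma chain_le (τ : ZMod n → ℕ) (h : ∀ e, ¬ τ (e + 1) < τ e) (e : ZMod n) :
    ∀ k : ℕ, τ e ≤ τ (e + (k : ZMod n))
  | 0 => by simp
  | (k+1) => by
    have h1 := chain_le τ h e k
    have h2 := h (e + (k : ZMod n))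
    have : e + ((k+1 : ℕ) : ZMod n) = e + (k : ZMod n) + 1 := by push_cast; ring
    rw [this]; omega

lemma chain_ge (τ : ZMod n → ℕ) (h : ∀ e, ¬ τ e < τ (e + 1)) (e : ZMod n) :
    ∀ k : ℕ, τ (e + (k : ZMod n)) ≤ τ e
  | 0 => by simp
  | (k+1) => by
    have h1 := chain_ge τ h e k
    have h2 := h (e + (k : ZMod n))
    have : e + ((k+1 : ℕ) : ZMod n) = e + (k : ZMod n) + 1 := by push_cast; ring
    rw [this]; omega

lemma sig_feas (hn : 1 ≤ n) (τ : ZMod n → ℕ) : sig τ ∈ Feas n := by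
  by_cases hg : ∃ e, sig τ e = .gt
  · by_cases hl : ∃ e, sig τ e = .lt
    · exact Or.inr ⟨hl, hg⟩
    · exfalso
      obtain ⟨b, hb⟩ := hg
      rw [sig_gt_iff] at hb
      push_neg at hl
      have h1 : ∀ e, ¬ τ e < τ (e + 1) := by
        intro e he
        exact hl e ((sig_lt_iff τ e).mpr he)
      have h2 := chain_ge τ h1 (b + 1) (n - 1)
      rw [cast_nsub_one hn] at h2
      have h3 : b + 1 + (-1 : ZMod n) = b := by ring
      rw [h3] at h2
      omega
  · by_cases hl : ∃ e, sig τ e = .lt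
    · exfalso
      obtain ⟨a, ha⟩ := hl
      rw [sig_lt_iff] at ha
      push_neg at hg
      have h1 : ∀ e, ¬ τ (e + 1) < τ e := by
        intro e he
        exact hg e ((sig_gt_iff τ e).mpr he)
      have h2 := chain_le τ h1 (a + 1) (n - 1)
      rw [cast_nsub_one hn] at h2
      have h3 : a + 1 + (-1 : ZMod n) = a := by ring
      rw [h3] at h2
      omega
    · push_neg at hg hl
      exact Or.inl fun e => ord_eq_of _ (hl e) (hg e)

lemma feas_exists_not_lt {σ : ZMod n → Ordering} (hσ : σ ∈ Feas n) (i : ZMod n) :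
    ∃ m : ℕ, m ≤ n - 1 ∧ σ (i - 1 - (m : ZMod n)) ≠ .lt := by
  rcases hσ with h | ⟨_, ⟨b, hb⟩⟩
  · exact ⟨0, by omega, by rw [h]; simp⟩
  · refine ⟨(i - 1 - b).val, by have := castval_lt (i - 1 - b); omega, ?_⟩
    rw [cast_val]
    have : i - 1 - (i - 1 - b) = b := by ring
    rw [this, hb]; simp

lemma feas_exists_not_gt {σ : ZMod n → Ordering} (hσ : σ ∈ Feas n) (i : ZMod n) :
    ∃ m : ℕ, m ≤ n - 1 ∧ σ (i + (m : ZMod n)) ≠ .gt := by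
  rcases hσ with h | ⟨⟨a, ha⟩, _⟩
  · exact ⟨0, by omega, by rw [h]; simp⟩
  · refine ⟨(a - i).val, by have := castval_lt (a - i); omega, ?_⟩
    rw [cast_val]
    have : i + (a - i) = a := by ring
    rw [this, ha]; simp

open Classical in
noncomputable def lrun (σ : ZMod n → Ordering) (i : ZMod n) : ℕ :=
  if h : ∃ m : ℕ, σ (i - 1 - (m : ZMod n)) ≠ .lt then Nat.find h else 0

open Classical in
noncomputable def rrun (σ : ZMod n → Ordering) (i : ZMod n) : ℕ :=
  if h : ∃ m : ℕ, σ (i + (m : ZMod n)) ≠ .gt then Nat.find h else 0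

lemma lrun_spec1 {σ : ZMod n → Ordering} (hσ : σ ∈ Feas n) (i : ZMod n) :
    ∀ j : ℕ, j < lrun σ i → σ (i - 1 - (j : ZMod n)) = .lt := by
  classical
  obtain ⟨m, _, hm⟩ := feas_exists_not_lt hσ i
  have h : ∃ m : ℕ, σ (i - 1 - (m : ZMod n)) ≠ .lt := ⟨m, hm⟩
  intro j hj
  rw [lrun, dif_pos h] at hj
  have := Nat.find_min h hj
  simpa using this

lemma lrun_spec2 {σ : ZMod n → Ordering} (hσ : σ ∈ Feas n) (i : ZMod n) :
    σ (i - 1 - (lrun σ i : ZMod n)) ≠ .lt := by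
  obtain ⟨m, _, hm⟩ := feas_exists_not_lt hσ i
  have h : ∃ m : ℕ, σ (i - 1 - (m : ZMod n)) ≠ .lt := ⟨m, hm⟩
  rw [lrun, dif_pos h]
  exact Nat.find_spec h

lemma lrun_le {σ : ZMod n → Ordering} (hσ : σ ∈ Feas n) (i : ZMod n) :
    lrun σ i ≤ n - 1 := by
  obtain ⟨m, hmn, hm⟩ := feas_exists_not_lt hσ i
  have h : ∃ m : ℕ, σ (i - 1 - (m : ZMod n)) ≠ .lt := ⟨m, hm⟩
  rw [lrun, dif_pos h]
  exact le_trans (Nat.find_min' h hm) hmn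

lemma rrun_spec1 {σ : ZMod n → Ordering} (hσ : σ ∈ Feas n) (i : ZMod n) :
    ∀ j : ℕ, j < rrun σ i → σ (i + (j : ZMod n)) = .gt := by
  classical
  obtain ⟨m, _, hm⟩ := feas_exists_not_gt hσ i
  have h : ∃ m : ℕ, σ (i + (m : ZMod n)) ≠ .gt := ⟨m, hm⟩
  intro j hj
  rw [rrun, dif_pos h] at hj
  have := Nat.find_min h hj
  simpa using this

lemma rrun_spec2 {σ : ZMod n → Ordering} (hσ : σ ∈ Feas n) (i : ZMod n) :
    σ (i + (rrun σ i : ZMod n)) ≠ .gt := by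
  obtain ⟨m, _, hm⟩ := feas_exists_not_gt hσ i
  have h : ∃ m : ℕ, σ (i + (m : ZMod n)) ≠ .gt := ⟨m, hm⟩
  rw [rrun, dif_pos h]
  exact Nat.find_spec h

lemma rrun_le {σ : ZMod n → Ordering} (hσ : σ ∈ Feas n) (i : ZMod n) :
    rrun σ i ≤ n - 1 := by
  obtain ⟨m, hmn, hm⟩ := feas_exists_not_gt hσ i
  have h : ∃ m : ℕ, σ (i + (m : ZMod n)) ≠ .gt := ⟨m, hm⟩
  rw [rrun, dif_pos h]
  exact le_trans (Nat.find_min' h hm) hmn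

lemma lrun_eq_zero_iff {σ : ZMod n → Ordering} (hσ : σ ∈ Feas n) (i : ZMod n) :
    lrun σ i = 0 ↔ σ (i - 1) ≠ .lt := by
  constructor
  · intro h
    have := lrun_spec2 hσ i
    rw [h] at this
    simpa using this
  · intro h
    by_contra hne
    have := lrun_spec1 hσ i 0 (by omega)
    simp only [Nat.cast_zero, sub_zero] at this
    exact h this

lemma rrun_eq_zero_iff {σ : ZMod n → Ordering} (hσ : σ ∈ Feas n) (i : ZMod n) :
    rrun σ i = 0 ↔ σ i ≠ .gt := by
  constructor
  · intro h
    have := rrun_spec2 hσ i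
    rw [h] at this
    simpa using this
  · intro h
    by_contra hne
    have := rrun_spec1 hσ i 0 (by omega)
    simp only [Nat.cast_zero, add_zero] at this
    exact h this

lemma rrun_congr {σ σ' : ZMod n → Ordering} (hσ : σ ∈ Feas n) (hσ' : σ' ∈ Feas n)
    (h : ∀ e, σ e = .gt ↔ σ' e = .gt) (i : ZMod n) : rrun σ i = rrun σ' i := by
  obtain ⟨m, _, hm⟩ := feas_exists_not_gt hσ i
  obtain ⟨m', _, hm'⟩ := feas_exists_not_gt hσ' i
  have h1 : ∃ m : ℕ, σ (i + (m : ZMod n)) ≠ .gt := ⟨m, hm⟩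
  have h2 : ∃ m : ℕ, σ' (i + (m : ZMod n)) ≠ .gt := ⟨m', hm'⟩
  rw [rrun, dif_pos h1, rrun, dif_pos h2]
  apply le_antisymm
  · apply Nat.find_min' h1
    intro hc
    exact Nat.find_spec h2 ((h _).mp hc)
  · apply Nat.find_min' h2
    intro hc
    exact Nat.find_spec h1 ((h _).mpr hc)

noncomputable def Psi (σ : ZMod n → Ordering) : (ZMod n → Bool) → ZMod n → Bool :=
  fun x i => P x i (lrun σ i) && C x i (rrun σ i)

theorem async_eq_Psi (hn : 1 ≤ n) (τ : ZMod n → ℕ) : ecaAsync n rule τ = Psi (sig τ) := by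
  have hσ : sig τ ∈ Feas n := sig_feas hn τ
  funext x i
  apply async_formula τ (τ i) i le_rfl
  · intro j hj
    have h1 := lrun_spec1 hσ i j hj
    rw [sig_lt_iff] at h1
    have e1 : i - 1 - (j : ZMod n) = i - (j : ZMod n) - 1 := by ring
    rw [e1] at h1
    have e2 : i - (j : ZMod n) - 1 + 1 = i - (j : ZMod n) := by ring
    rwa [e2] at h1
  · intro hc
    apply lrun_spec2 hσ i
    rw [sig_lt_iff]
    have e1 : i - 1 - ((lrun (sig τ) i : ℕ) : ZMod n) = i - ((lrun (sig τ) i : ℕ) : ZMod n) - 1 := by ring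
    rw [e1]
    have e2 : i - ((lrun (sig τ) i : ℕ) : ZMod n) - 1 + 1 = i - ((lrun (sig τ) i : ℕ) : ZMod n) := by ring
    rwa [e2]
  · intro j hj
    have h1 := rrun_spec1 hσ i j hj
    rwa [sig_gt_iff] at h1
  · intro hc
    apply rrun_spec2 hσ i
    rwa [sig_gt_iff]

section Realize
variable (σ : ZMod n → Ordering) (b : ZMod n)

/-- distance from b+1 -/
def dd (i : ZMod n) : ℕ := (i - (b + 1)).val

def Lcnt (i : ZMod n) : ℕ :=
  ((Finset.range (dd b i)).filter (fun j : ℕ => σ (b + 1 + ((j : ℕ) : ZMod n)) = .lt)).card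

def Gcnt (i : ZMod n) : ℕ :=
  ((Finset.range (dd b i)).filter (fun j : ℕ => σ (b + 1 + ((j : ℕ) : ZMod n)) = .gt)).card

def real_tau (i : ZMod n) : ℕ := n + n * Lcnt σ b i - Gcnt σ b i

lemma Gcnt_le (i : ZMod n) : Gcnt σ b i ≤ n - 1 := by
  have h1 : Gcnt σ b i ≤ dd b i := le_trans (Finset.card_filter_le _ _) (by simp)
  have h2 : dd b i < n := castval_lt _
  omega

lemma real_tau_eq (i : ZMod n) :
    real_tau σ b i + Gcnt σ b i = n + n * Lcnt σ b i := by
  have h1 := Gcnt_le σ b i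
  have hn : 1 ≤ n := Nat.one_le_iff_ne_zero.mpr (NeZero.ne n)
  rw [real_tau, Nat.sub_add_cancel (by omega)]

lemma dd_succ (hn : 1 ≤ n) (e : ZMod n) (he : e ≠ b) : dd b (e + 1) = dd b e + 1 := by
  have key : e - (b + 1) ≠ ((n - 1 : ℕ) : ZMod n) := by
    rw [cast_nsub_one hn]
    intro hc
    apply he
    have : e = b + 1 + (-1) := by rw [← hc]; ring
    rw [this]; ring
  have h2 : dd b e < n - 1 := by
    have h3 : dd b e < n := castval_lt _
    rcases Nat.lt_or_ge (dd b e) (n - 1) with h | h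
    · exact h
    · exfalso
      apply key
      have : dd b e = n - 1 := by omega
      rw [← cast_val (e - (b+1)), dd] at *
      rw [this]
  show (e + 1 - (b + 1)).val = (e - (b + 1)).val + 1
  have : e + 1 - (b + 1) = (e - (b + 1)) + 1 := by ring
  rw [this, ZMod.val_add, ZMod.val_one'' (by omega), Nat.mod_eq_of_lt]
  have := castval_lt (e - (b+1))
  show (e - (b+1)).val + 1 < n
  have h4 : dd b e = (e - (b+1)).val := rfl
  omega

lemma cnt_edge (hn : 1 ≤ n) (e : ZMod n) : b + 1 + ((dd b e : ℕ) : ZMod n) = e := by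
  rw [dd, cast_val]; ring

lemma Lcnt_succ (hn : 1 ≤ n) (e : ZMod n) (he : e ≠ b) :
    Lcnt σ b (e + 1) = Lcnt σ b e + (if σ e = .lt then 1 else 0) := by
  rw [Lcnt, Lcnt, dd_succ b hn e he, Finset.range_add_one, Finset.filter_insert]
  rw [cnt_edge b hn e]
  split_ifs with h
  · rw [Finset.card_insert_of_notMem (by simp)]
  · simp

lemma Gcnt_succ (hn : 1 ≤ n) (e : ZMod n) (he : e ≠ b) :
    Gcnt σ b (e + 1) = Gcnt σ b e + (if σ e = .gt then 1 else 0) := by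
  rw [Gcnt, Gcnt, dd_succ b hn e he, Finset.range_add_one, Finset.filter_insert]
  rw [cnt_edge b hn e]
  split_ifs with h
  · rw [Finset.card_insert_of_notMem (by simp)]
  · simp

end Realize

theorem exists_tau (hn : 3 ≤ n) {σ : ZMod n → Ordering} (hσ : σ ∈ Feas n) :
    ∃ τ : ZMod n → ℕ, sig τ = σ := by
  have hn1 : 1 ≤ n := by omega
  rcases hσ with hall | ⟨⟨a, ha⟩, ⟨b, hb⟩⟩
  · refine ⟨fun _ => 0, ?_⟩
    funext e
    rw [hall e, sig]
    simp
  · refine ⟨real_tau σ b, ?_⟩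
    funext e
    by_cases he : e = b
    · rw [he, hb]
      -- τ (b+1) = n, τ b ≥ n + 1
      have h1 : dd b (b + 1) = 0 := by
        show (b + 1 - (b + 1)).val = 0
        simp
      have h2 : real_tau σ b (b + 1) = n := by
        rw [real_tau, Lcnt, Gcnt, h1]
        simp
      have h3 : 1 ≤ Lcnt σ b b := by
        rw [Lcnt]
        apply Finset.card_pos.mpr
        refine ⟨(a - (b + 1)).val, ?_⟩
        rw [Finset.mem_filter, Finset.mem_range]
        constructor
        · have h4 : (a - (b+1)).val < n := castval_lt _
          have h5 : dd b b = n - 1 := by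
            show (b - (b + 1)).val = n - 1
            have e1 : b - (b + 1) = ((n - 1 : ℕ) : ZMod n) := by
              rw [cast_nsub_one hn1]; ring
            rw [e1, ZMod.val_cast_of_lt (by omega)]
          have h6 : (a - (b+1)).val ≠ n - 1 := by
            intro hc
            have : a - (b + 1) = ((n-1:ℕ) : ZMod n) := by
              rw [← cast_val (a - (b+1)), hc]
            rw [cast_nsub_one hn1] at this
            have : a = b := by
              have : a = b + 1 + (-1) := by rw [← this]; ring
              rw [this]; ring
            rw [this] at ha
            rw [ha] at hb
            exact absurd hb (by simp)
          omega
        · rw [cast_val]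
          have : b + 1 + (a - (b + 1)) = a := by ring
          rw [this]; exact ha
      have h4 := real_tau_eq σ b b
      have h5 := Gcnt_le σ b b
      have h6 : n * 1 ≤ n * Lcnt σ b b := Nat.mul_le_mul_left n h3
      rw [sig, h2, if_neg (by omega), if_pos (by omega)]
    · have hL := Lcnt_succ σ b hn1 e he
      have hG := Gcnt_succ σ b hn1 e he
      have h4 := real_tau_eq σ b e
      have h5 := real_tau_eq σ b (e + 1)
      have h6 := Gcnt_le σ b e
      cases hoe : σ e with
      | lt =>
        rw [hoe] at hL hG; simp at hL hG
        rw [hL] at h5; rw [hG] at h5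
        rw [sig, if_pos (by rw [Nat.mul_add] at h5; omega)]
      | eq =>
        rw [hoe] at hL hG; simp at hL hG
        rw [hL] at h5; rw [hG] at h5
        rw [sig, if_neg (by omega), if_neg (by omega)]
      | gt =>
        rw [hoe] at hL hG; simp at hL hG
        rw [hL] at h5; rw [hG] at h5
        rw [sig, if_neg (by omega), if_pos (by omega)]


def chi (p : ZMod n) : ZMod n → Bool := fun j => decide (j ≠ p)

lemma natcast_ne {a b : ℕ} (ha : a < n) (hb : b < n) (hab : a ≠ b) :
    (a : ZMod n) ≠ (b : ZMod n) := by
  intro hc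
  apply hab
  have := ZMod.val_cast_of_lt ha
  rw [hc, ZMod.val_cast_of_lt hb] at this
  omega

lemma one_ne_zero' (hn : 3 ≤ n) : (1 : ZMod n) ≠ 0 := by
  have := natcast_ne (n := n) (a := 1) (b := 0) (by omega) (by omega) (by omega)
  simpa using this

lemma sub_one_ne (hn : 3 ≤ n) (i : ZMod n) : i - 1 ≠ i := by
  intro hc
  apply one_ne_zero' hn
  linear_combination -hc

lemma add_one_ne (hn : 3 ≤ n) (i : ZMod n) : i + 1 ≠ i := by
  intro hc
  apply one_ne_zero' hn
  linear_combination hc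

lemma P_chi_self (p : ZMod n) (l : ℕ) : P (chi p) p l = true := by
  cases l with
  | zero => simp [P, chi]
  | succ l => simp [P, chi]

lemma P_chi_prev (hn : 3 ≤ n) (i : ZMod n) (l : ℕ) :
    P (chi (i - 1)) i l = decide (l ≠ 0) := by
  cases l with
  | zero =>
    have h1 : chi (i - 1) (i - 1) = false := by simp [chi]
    have h2 : chi (i - 1) i = true := decide_eq_true (Ne.symm (sub_one_ne hn i))
    show (chi (i - 1) (i - 1) || !chi (i - 1) i) = _
    rw [h1, h2]
    simp
  | succ l =>
    show (P (chi (i - 1)) (i - 1) l || !chi (i - 1) i) = _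
    rw [P_chi_self]
    simp

lemma C_chi_self (hn : 3 ≤ n) (i : ZMod n) (r : ℕ) : C (chi i) i r = decide (r = 0) := by
  cases r with
  | zero =>
    have h2 : chi i (i + 1) = true := decide_eq_true (add_one_ne hn i)
    show chi i (i + 1) = _
    rw [h2]
    simp
  | succ r =>
    have h1 : chi i i = false := by simp [chi]
    have h2 : chi i (i + 1) = true := decide_eq_true (add_one_ne hn i)
    show ((chi i i || !chi i (i + 1)) && C (chi i) (i + 1) r) = _
    rw [h1, h2]
    simp

lemma C_chi_gen (p : ZMod n) : ∀ (r : ℕ) (i : ZMod n),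
    (∀ j : ℕ, j < r → i + (j : ZMod n) ≠ p) →
    C (chi p) i r = decide (i + (r : ZMod n) + 1 ≠ p)
  | 0, i, _ => by simp [C, chi]
  | (r+1), i, h => by
    have h0 : i ≠ p := by simpa using h 0 (by omega)
    have ih := C_chi_gen p r (i + 1) (fun j hj => by
      have := h (j + 1) (by omega)
      rwa [shiftR] at this)
    simp only [C]
    have hc : chi p i = true := decide_eq_true h0
    rw [hc, ih]
    have e1 : i + 1 + (r : ZMod n) + 1 = i + ((r + 1 : ℕ) : ZMod n) + 1 := by
      push_cast; ring
    rw [e1]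
    simp

lemma cast_nsub_two (hn : 3 ≤ n) : (((n - 2 : ℕ)) : ZMod n) = -2 := by
  have h1 : ((n : ℕ) : ZMod n) = 0 := ZMod.natCast_self n
  push_cast [Nat.cast_sub (by omega : 2 ≤ n)]
  rw [h1]; ring

lemma C_chi_prev (hn : 3 ≤ n) (i : ZMod n) (r : ℕ) (hr : r ≤ n - 1) :
    C (chi (i - 1)) i r = decide (r ≠ n - 2) := by
  rw [C_chi_gen (i - 1) r i]
  · rw [decide_eq_decide]
    constructor
    · intro hne hc
      apply hne
      rw [hc, cast_nsub_two hn]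
      ring
    · intro hne hc
      apply hne
      have : (r : ZMod n) = ((n - 2 : ℕ) : ZMod n) := by
        rw [cast_nsub_two hn]
        have : (r : ZMod n) = (i - 1) - i - 1 := by rw [← hc]; ring
        rw [this]; ring
      have h2 := ZMod.val_cast_of_lt (show r < n by omega)
      rw [this, ZMod.val_cast_of_lt (show n - 2 < n by omega)] at h2
      omega
  · intro j hj hc
    have : (j : ZMod n) = ((n - 1 : ℕ) : ZMod n) := by
      rw [cast_nsub_one (by omega : 1 ≤ n)]
      have : (j : ZMod n) = (i - 1) - i := by rw [← hc]; ring
      rw [this]; ring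
    have h2 := ZMod.val_cast_of_lt (show j < n by omega)
    rw [this, ZMod.val_cast_of_lt (show n - 1 < n by omega)] at h2
    omega

lemma Psi_probe1 {σ : ZMod n → Ordering} (hσ : σ ∈ Feas n) (hn : 3 ≤ n) (i : ZMod n) :
    Psi σ (chi i) i = decide (rrun σ i = 0) := by
  rw [Psi, P_chi_self, C_chi_self hn]
  simp

lemma Psi_probe2 {σ : ZMod n → Ordering} (hσ : σ ∈ Feas n) (hn : 3 ≤ n) (i : ZMod n) :
    Psi σ (chi (i - 1)) i = (decide (lrun σ i ≠ 0) && decide (rrun σ i ≠ n - 2)) := by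
  rw [Psi, P_chi_prev hn, C_chi_prev hn i _ (rrun_le hσ i)]

lemma cast_nsub_three (hn : 3 ≤ n) : (((n - 3 : ℕ)) : ZMod n) = -3 := by
  have h1 : ((n : ℕ) : ZMod n) = 0 := ZMod.natCast_self n
  push_cast [Nat.cast_sub (by omega : 3 ≤ n)]
  rw [h1]; ring

lemma C_last (x : ZMod n → Bool) : ∀ (r : ℕ) (i : ZMod n),
    C x i r = true → x (i + (r : ZMod n) + 1) = true
  | 0, i, h => by simpa [C] using h
  | (r+1), i, h => by
    simp only [C, Bool.and_eq_true] at h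
    have := C_last x r (i + 1) h.2
    rwa [shiftR]
    
lemma C_factor (x : ZMod n → Bool) : ∀ (r : ℕ) (i : ZMod n) (j : ℕ), j < r →
    C x i r = true → (x (i + (j : ZMod n)) || !x (i + (j : ZMod n) + 1)) = true
  | (r+1), i, 0, _, h => by
    simp only [C, Bool.and_eq_true] at h
    simpa using h.1
  | (r+1), i, (j+1), hj, h => by
    simp only [C, Bool.and_eq_true] at h
    have := C_factor x r (i + 1) j (by omega) h.2
    rwa [← shiftR] at this

lemma key_bool (hn : 3 ≤ n) (x : ZMod n → Bool) (i : ZMod n) :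
    (P x i 2 && C x i (n - 2)) = (P x i 0 && C x i (n - 2)) := by
  cases hC : C x i (n - 2) with
  | false => simp
  | true =>
    have h1 : x (i - 1) = true := by
      have := C_last x (n - 2) i hC
      rwa [cast_nsub_two hn, show i + (-2 : ZMod n) + 1 = i - 1 by ring] at this
    have h2 : (x (i - 3) || !x (i - 2)) = true := by
      have := C_factor x (n - 2) i (n - 3) (by omega) hC
      rwa [cast_nsub_three hn, show i + (-3 : ZMod n) = i - 3 by ring,
        show i - 3 + 1 = i - 2 by ring] at this
    have hP0 : P x i 0 = true := by
      show (x (i - 1) || !x i) = true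
      rw [h1]; simp
    have hP2 : P x i 2 = true := by
      show ((P x (i - 1 - 1) 0 || !x (i - 1)) || !x i) = true
      have : P x (i - 1 - 1) 0 = (x (i - 3) || !x (i - 2)) := by
        show (x (i - 1 - 1 - 1) || !x (i - 1 - 1)) = _
        rw [show i - 1 - 1 - 1 = i - 3 by ring, show i - 1 - 1 = i - 2 by ring]
      rw [this, h2]; simp
    rw [hP0, hP2]

def patA (k : ZMod n) : ZMod n → Ordering := fun e => if e = k ∨ e = k + 1 then .lt else .gt

def patB (k : ZMod n) : ZMod n → Ordering :=
  fun e => if e = k then .lt else if e = k + 1 then .eq else .gt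

lemma two_ne_zero' (hn : 3 ≤ n) : (2 : ZMod n) ≠ 0 := by
  have := natcast_ne (n := n) (a := 2) (b := 0) (by omega) (by omega) (by omega)
  simpa using this

lemma patA_feas (hn : 3 ≤ n) (k : ZMod n) : patA k ∈ Feas n := by
  refine Or.inr ⟨⟨k, by simp [patA]⟩, ⟨k + 2, ?_⟩⟩
  rw [patA, if_neg]
  push_neg
  constructor
  · intro hc
    exact two_ne_zero' hn (by linear_combination hc)
  · intro hc
    exact one_ne_zero' hn (by linear_combination hc)

lemma patB_feas (hn : 3 ≤ n) (k : ZMod n) : patB k ∈ Feas n := by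
  refine Or.inr ⟨⟨k, by simp [patB]⟩, ⟨k + 2, ?_⟩⟩
  rw [patB, if_neg, if_neg]
  · intro hc
    exact one_ne_zero' hn (by linear_combination hc)
  · intro hc
    exact two_ne_zero' hn (by linear_combination hc)

lemma lrun_eq {σ : ZMod n → Ordering} (hσ : σ ∈ Feas n) (i : ZMod n) (m : ℕ)
    (h1 : ∀ j : ℕ, j < m → σ (i - 1 - (j : ZMod n)) = .lt)
    (h2 : σ (i - 1 - (m : ZMod n)) ≠ .lt) : lrun σ i = m := by
  rcases Nat.lt_trichotomy (lrun σ i) m with h | h | h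
  · exact absurd (h1 _ h) (lrun_spec2 hσ i)
  · exact h
  · exact absurd (lrun_spec1 hσ i m h) h2

lemma rrun_eq {σ : ZMod n → Ordering} (hσ : σ ∈ Feas n) (i : ZMod n) (m : ℕ)
    (h1 : ∀ j : ℕ, j < m → σ (i + (j : ZMod n)) = .gt)
    (h2 : σ (i + (m : ZMod n)) ≠ .gt) : rrun σ i = m := by
  rcases Nat.lt_trichotomy (rrun σ i) m with h | h | h
  · exact absurd (h1 _ h) (rrun_spec2 hσ i)
  · exact h
  · exact absurd (rrun_spec1 hσ i m h) h2

lemma cast_small_ne_zero (hn : 3 ≤ n) (c : ℕ) (h0 : 0 < c) (h1 : c < n) :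
    (c : ZMod n) ≠ 0 := by
  have := natcast_ne (n := n) (a := c) (b := 0) h1 (by omega) (by omega)
  simpa using this

lemma patAB_gt_iff (k e : ZMod n) :
    (patA k e = .gt ↔ patB k e = .gt) := by
  rw [patA, patB]
  split_ifs with h1 h2 h3 <;> simp_all

lemma rrun_patA_eq_patB (hn : 3 ≤ n) (k i : ZMod n) :
    rrun (patA k) i = rrun (patB k) i :=
  rrun_congr (patA_feas hn k) (patB_feas hn k) (fun e => patAB_gt_iff k e) i

lemma ne_helpers (hn : 3 ≤ n) (i k : ZMod n) (h1 : i ≠ k + 1) (h2 : i ≠ k + 2) :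
    i - 1 ≠ k ∧ i - 1 ≠ k + 1 := by
  constructor
  · intro hc; exact h1 (by linear_combination hc)
  · intro hc; exact h2 (by linear_combination hc)

lemma lrun_patA (hn : 3 ≤ n) (k i : ZMod n) (h1 : i ≠ k + 1) (h2 : i ≠ k + 2) :
    lrun (patA k) i = 0 := by
  apply lrun_eq (patA_feas hn k) i 0 (by omega)
  obtain ⟨hx, hy⟩ := ne_helpers hn i k h1 h2
  simp only [Nat.cast_zero, sub_zero, patA]
  rw [if_neg (by push_neg; exact ⟨hx, hy⟩)]
  simp

lemma lrun_patB (hn : 3 ≤ n) (k i : ZMod n) (h1 : i ≠ k + 1) (h2 : i ≠ k + 2) :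
    lrun (patB k) i = 0 := by
  apply lrun_eq (patB_feas hn k) i 0 (by omega)
  obtain ⟨hx, hy⟩ := ne_helpers hn i k h1 h2
  simp only [Nat.cast_zero, sub_zero, patB]
  rw [if_neg hx, if_neg hy]
  simp

lemma lrun_patA_k1 (hn : 3 ≤ n) (k : ZMod n) : lrun (patA k) (k + 1) = 1 := by
  apply lrun_eq (patA_feas hn k) (k + 1) 1
  · intro j hj
    have hj0 : j = 0 := by omega
    subst hj0
    rw [show k + 1 - 1 - ((0 : ℕ) : ZMod n) = k by push_cast; ring]
    rw [patA, if_pos (Or.inl rfl)]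
  · rw [show k + 1 - 1 - ((1 : ℕ) : ZMod n) = k - 1 by push_cast; ring, patA, if_neg]
    · simp
    · push_neg
      constructor
      · exact sub_one_ne hn k
      · intro hc; exact two_ne_zero' hn (by linear_combination -hc)

lemma lrun_patB_k1 (hn : 3 ≤ n) (k : ZMod n) : lrun (patB k) (k + 1) = 1 := by
  apply lrun_eq (patB_feas hn k) (k + 1) 1
  · intro j hj
    have hj0 : j = 0 := by omega
    subst hj0
    rw [show k + 1 - 1 - ((0 : ℕ) : ZMod n) = k by push_cast; ring]
    rw [patB, if_pos rfl]
  · rw [show k + 1 - 1 - ((1 : ℕ) : ZMod n) = k - 1 by push_cast; ring, patB,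
      if_neg (sub_one_ne hn k), if_neg]
    · simp
    · intro hc; exact two_ne_zero' hn (by linear_combination -hc)

lemma lrun_patA_k2 (hn : 3 ≤ n) (k : ZMod n) : lrun (patA k) (k + 2) = 2 := by
  apply lrun_eq (patA_feas hn k) (k + 2) 2
  · intro j hj
    interval_cases j
    · rw [show k + 2 - 1 - ((0 : ℕ) : ZMod n) = k + 1 by push_cast; ring]
      rw [patA, if_pos (Or.inr rfl)]
    · rw [show k + 2 - 1 - ((1 : ℕ) : ZMod n) = k by push_cast; ring]
      rw [patA, if_pos (Or.inl rfl)]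
  · rw [show k + 2 - 1 - ((2 : ℕ) : ZMod n) = k - 1 by push_cast; ring, patA, if_neg]
    · simp
    · push_neg
      constructor
      · exact sub_one_ne hn k
      · intro hc; exact two_ne_zero' hn (by linear_combination -hc)

lemma lrun_patB_k2 (hn : 3 ≤ n) (k : ZMod n) : lrun (patB k) (k + 2) = 0 := by
  apply lrun_eq (patB_feas hn k) (k + 2) 0 (by omega)
  rw [show k + 2 - 1 - ((0 : ℕ) : ZMod n) = k + 1 by push_cast; ring]
  rw [patB, if_neg, if_pos rfl]
  · simp
  · intro hc; exact one_ne_zero' hn (by linear_combination hc)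

lemma rrun_patA_k2 (hn : 3 ≤ n) (k : ZMod n) : rrun (patA k) (k + 2) = n - 2 := by
  apply rrun_eq (patA_feas hn k) (k + 2) (n - 2)
  · intro j hj
    rw [patA, if_neg]
    push_neg
    constructor
    · intro hc
      exact cast_small_ne_zero hn (j + 2) (by omega) (by omega)
        (by push_cast; linear_combination hc)
    · intro hc
      exact cast_small_ne_zero hn (j + 1) (by omega) (by omega)
        (by push_cast; linear_combination hc)
  · rw [cast_nsub_two hn, show k + 2 + (-2 : ZMod n) = k by ring, patA,
      if_pos (Or.inl rfl)]
    simp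

theorem Psi_patA_eq_patB (hn : 3 ≤ n) (k : ZMod n) : Psi (patA k) = Psi (patB k) := by
  funext x i
  rw [Psi, Psi, ← rrun_patA_eq_patB hn k i]
  by_cases h2 : i = k + 2
  · subst h2
    rw [lrun_patA_k2 hn, lrun_patB_k2 hn, rrun_patA_k2 hn]
    exact key_bool hn x (k + 2)
  · by_cases h1 : i = k + 1
    · subst h1
      rw [lrun_patA_k1 hn, lrun_patB_k1 hn]
    · rw [lrun_patA hn k i h1 h2, lrun_patB hn k i h1 h2]

lemma ord_ext (o o' : Ordering) (h1 : o = .lt ↔ o' = .lt) (h2 : o = .gt ↔ o' = .gt) :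
    o = o' := by
  cases o <;> cases o' <;> simp_all

theorem Psi_inj (hn : 3 ≤ n) {σ σ' : ZMod n → Ordering} (hσ : σ ∈ Feas n)
    (hσ' : σ' ∈ Feas n) (h : Psi σ = Psi σ') :
    σ = σ' ∨ ∃ k, (σ = patA k ∧ σ' = patB k) ∨ (σ = patB k ∧ σ' = patA k) := by
  have hgt : ∀ e, σ e = .gt ↔ σ' e = .gt := by
    intro e
    have h1 : Psi σ (chi e) e = Psi σ' (chi e) e := by rw [h]
    rw [Psi_probe1 hσ hn, Psi_probe1 hσ' hn, decide_eq_decide] at h1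
    rw [rrun_eq_zero_iff hσ, rrun_eq_zero_iff hσ'] at h1
    exact not_iff_not.mp h1
  have hrr : ∀ i, rrun σ i = rrun σ' i := rrun_congr hσ hσ' hgt
  have hlt : ∀ e, rrun σ (e + 1) ≠ n - 2 → (σ e = .lt ↔ σ' e = .lt) := by
    intro e hr2
    have h1 : Psi σ (chi (e + 1 - 1)) (e + 1) = Psi σ' (chi (e + 1 - 1)) (e + 1) := by rw [h]
    rw [Psi_probe2 hσ hn, Psi_probe2 hσ' hn] at h1
    rw [← hrr (e + 1)] at h1
    rw [decide_eq_true (show rrun σ (e+1) ≠ n - 2 from hr2)] at h1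
    simp only [Bool.and_true] at h1
    rw [decide_eq_decide] at h1
    simp only [ne_eq] at h1
    rw [lrun_eq_zero_iff hσ, lrun_eq_zero_iff hσ'] at h1
    rw [show e + 1 - 1 = e by ring] at h1
    exact not_iff_not.mp (not_iff_not.mp h1)
  -- per-edge dichotomy
  have edge : ∀ e, σ e = σ' e ∨
      (σ (e - 1) = .lt ∧ σ' (e - 1) = .lt ∧ σ e ≠ .gt ∧ σ' e ≠ .gt ∧
       (∀ d, d ≠ e - 1 → d ≠ e → σ d = .gt ∧ σ' d = .gt)) := by
    intro e
    by_cases hr2 : rrun σ (e + 1) = n - 2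
    · by_cases hge : σ e = .gt
      · exact Or.inl (hge.trans ((hgt e).mp hge).symm)
      · have hge' : σ' e ≠ .gt := fun hc => hge ((hgt e).mpr hc)
        have hoff : ∀ d, d ≠ e - 1 → d ≠ e → σ d = .gt := by
          intro d hd1 hd2
          have hj : (((d - (e + 1)).val : ℕ) : ZMod n) = d - (e + 1) := cast_val _
          have hjlt : (d - (e + 1)).val < n := castval_lt _
          have hjn1 : (d - (e + 1)).val ≠ n - 1 := by
            intro hc
            apply hd2
            have : d - (e + 1) = ((n - 1 : ℕ) : ZMod n) := by rw [← hj, hc]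
            rw [cast_nsub_one (by omega : 1 ≤ n)] at this
            linear_combination this
          have hjn2 : (d - (e + 1)).val ≠ n - 2 := by
            intro hc
            apply hd1
            have : d - (e + 1) = ((n - 2 : ℕ) : ZMod n) := by rw [← hj, hc]
            rw [cast_nsub_two hn] at this
            linear_combination this
          have := rrun_spec1 hσ (e + 1) (d - (e + 1)).val (by omega)
          rwa [hj, show e + 1 + (d - (e + 1)) = d by ring] at this
        have hoff' : ∀ d, d ≠ e - 1 → d ≠ e → σ' d = .gt :=
          fun d h1 h2 => (hgt d).mp (hoff d h1 h2)
        have he1 : σ (e - 1) ≠ .gt := by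
          have := rrun_spec2 hσ (e + 1)
          rwa [hr2, cast_nsub_two hn, show e + 1 + (-2 : ZMod n) = e - 1 by ring] at this
        have he1' : σ' (e - 1) ≠ .gt := fun hc => he1 ((hgt (e - 1)).mpr hc)
        have hltiff : σ (e - 1) = .lt ↔ σ' (e - 1) = .lt := by
          apply hlt (e - 1)
          rw [show e - 1 + 1 = e by ring]
          rw [(rrun_eq_zero_iff hσ e).mpr hge]
          omega
        by_cases hl1 : σ (e - 1) = .lt
        · exact Or.inr ⟨hl1, hltiff.mp hl1, hge, hge', fun d h1 h2 => ⟨hoff d h1 h2, hoff' d h1 h2⟩⟩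
        · -- σ (e-1) = eq, so σ e must be lt by feasibility; same for σ'
          have h21 : σ (e + 1) = .gt := by
            apply hoff
            · intro hc; exact two_ne_zero' hn (by linear_combination hc)
            · intro hc; exact one_ne_zero' hn (by linear_combination hc)
          have hσe : σ e = .lt := by
            rcases hσ with hall | ⟨⟨a, ha⟩, _⟩
            · exact absurd (hall (e + 1)) (by rw [h21]; simp)
            · by_contra hc
              have : a ≠ e - 1 := fun hx => hl1 (hx ▸ ha)
              have h3 : a ≠ e := fun hx => hc (hx ▸ ha)
              have := hoff a this h3
              rw [ha] at this
              exact absurd this (by simp)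
          have hl1' : ¬ σ' (e - 1) = .lt := fun hc => hl1 (hltiff.mpr hc)
          have h21' : σ' (e + 1) = .gt := (hgt _).mp h21
          have hσe' : σ' e = .lt := by
            rcases hσ' with hall | ⟨⟨a, ha⟩, _⟩
            · exact absurd (hall (e + 1)) (by rw [h21']; simp)
            · by_contra hc
              have h2 : a ≠ e - 1 := fun hx => hl1' (hx ▸ ha)
              have h3 : a ≠ e := fun hx => hc (hx ▸ ha)
              have := hoff' a h2 h3
              rw [ha] at this
              exact absurd this (by simp)
          exact Or.inl (hσe.trans hσe'.symm)
    · apply Or.inl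
      exact ord_ext _ _ (hlt e hr2) (hgt e)
  by_cases hss : σ = σ'
  · exact Or.inl hss
  · right
    have hex : ∃ e, σ e ≠ σ' e := by
      by_contra hc
      push_neg at hc
      exact hss (funext hc)
    obtain ⟨e, he⟩ := hex
    rcases edge e with h1 | ⟨hb1, hb2, hb3, hb4, hb5⟩
    · exact absurd h1 he
    refine ⟨e - 1, ?_⟩
    have hk1 : e - 1 + 1 = e := by ring
    have hshape : ∀ (ρ : ZMod n → Ordering), ρ (e - 1) = .lt → ρ e ≠ .gt →
        (∀ d, d ≠ e - 1 → d ≠ e → ρ d = .gt) →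
        (ρ e = .lt → ρ = patA (e - 1)) ∧ (ρ e = .eq → ρ = patB (e - 1)) := by
      intro ρ hr1 hr2 hr3
      constructor
      · intro hre
        funext d
        rw [patA]
        by_cases hd1 : d = e - 1
        · rw [if_pos (Or.inl hd1), hd1, hr1]
        · by_cases hd2 : d = e
          · rw [if_pos (Or.inr (by rw [hd2, hk1])), hd2, hre]
          · rw [if_neg (by push_neg; exact ⟨hd1, by rwa [hk1]⟩)]
            exact hr3 d hd1 hd2
      · intro hre
        funext d
        rw [patB]
        by_cases hd1 : d = e - 1
        · rw [if_pos hd1, hd1, hr1]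
        · rw [if_neg hd1]
          by_cases hd2 : d = e
          · rw [if_pos (by rw [hd2, hk1]), hd2, hre]
          · rw [if_neg (by rwa [hk1])]
            exact hr3 d hd1 hd2
    have hs := hshape σ hb1 hb3 (fun d h1 h2 => (hb5 d h1 h2).1)
    have hs' := hshape σ' hb2 hb4 (fun d h1 h2 => (hb5 d h1 h2).2)
    have hσe : σ e = .lt ∨ σ e = .eq := by
      cases hev : σ e
      · exact Or.inl rfl
      · exact Or.inr rfl
      · exact absurd hev hb3
    have hσe' : σ' e = .lt ∨ σ' e = .eq := by
      cases hev : σ' e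
      · exact Or.inl rfl
      · exact Or.inr rfl
      · exact absurd hev hb4
    rcases hσe with h1 | h1 <;> rcases hσe' with h2 | h2
    · exact absurd (h1.trans h2.symm) he
    · exact Or.inl ⟨hs.1 h1, hs'.2 h2⟩
    · exact Or.inr ⟨hs.2 h1, hs'.1 h2⟩
    · exact absurd (h1.trans h2.symm) he

lemma patA_inj (hn : 3 ≤ n) : Function.Injective (patA (n := n)) := by
  intro k k' hkk
  by_contra hne
  have h1 := congrFun hkk k
  have h2 := congrFun hkk k'
  rw [patA, patA, if_pos (Or.inl rfl)] at h1
  rw [patA, patA, if_pos (Or.inl rfl)] at h2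
  have e1 : k = k' ∨ k = k' + 1 := by
    by_contra hc
    push_neg at hc
    rw [if_neg (by push_neg; exact hc)] at h1
    exact absurd h1.symm (by simp)
  have e2 : k' = k ∨ k' = k + 1 := by
    by_contra hc
    push_neg at hc
    rw [if_neg (by push_neg; exact hc)] at h2
    exact absurd h2 (by simp)
  rcases e1 with e1 | e1
  · exact hne e1
  · rcases e2 with e2 | e2
    · exact hne e2.symm
    · rw [e2] at e1
      exact two_ne_zero' hn (by linear_combination -e1)

lemma patB_ne_patA (hn : 3 ≤ n) (k j : ZMod n) : patB k ≠ patA j := by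
  intro hc
  have h1 := congrFun hc (k + 1)
  have e1 : patB k (k + 1) = .eq := by
    rw [patB, if_neg (add_one_ne hn k), if_pos rfl]
  rw [e1, patA] at h1
  split_ifs at h1 <;> simp_all

open Classical in
noncomputable def normal (σ : ZMod n → Ordering) : ZMod n → Ordering :=
  if h : ∃ k, σ = patA k then patB h.choose else σ

lemma normal_patA (hn : 3 ≤ n) (k : ZMod n) : normal (patA k) = patB k := by
  classical
  have h : ∃ j, patA k = patA (j : ZMod n) := ⟨k, rfl⟩
  rw [normal, dif_pos h]
  rw [← patA_inj hn h.choose_spec]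

lemma normal_of_not {σ : ZMod n → Ordering} (h : ¬ ∃ k, σ = patA k) : normal σ = σ := by
  classical
  rw [normal, dif_neg h]

lemma normal_patB (hn : 3 ≤ n) (k : ZMod n) : normal (patB k) = patB k :=
  normal_of_not (fun ⟨j, hj⟩ => patB_ne_patA hn k j hj)

lemma normal_cases (hn : 3 ≤ n) (σ : ZMod n → Ordering) :
    (normal σ = σ ∧ ∀ k, σ ≠ patA k) ∨ ∃ k, σ = patA k ∧ normal σ = patB k := by
  by_cases h : ∃ k, σ = patA k
  · obtain ⟨k, hk⟩ := h
    exact Or.inr ⟨k, hk, by rw [hk, normal_patA hn]⟩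
  · push_neg at h
    exact Or.inl ⟨normal_of_not (by push_neg; exact h), h⟩

lemma normal_idem (hn : 3 ≤ n) (σ : ZMod n → Ordering) : normal (normal σ) = normal σ := by
  rcases normal_cases hn σ with ⟨h1, _⟩ | ⟨k, _, h2⟩
  · rw [h1, h1]
  · rw [h2, normal_patB hn]

lemma normal_feas (hn : 3 ≤ n) {σ : ZMod n → Ordering} (hσ : σ ∈ Feas n) :
    normal σ ∈ Feas n := by
  rcases normal_cases hn σ with ⟨h1, _⟩ | ⟨k, _, h2⟩
  · rwa [h1]
  · rw [h2]; exact patB_feas hn k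

lemma Psi_normal (hn : 3 ≤ n) (σ : ZMod n → Ordering) : Psi σ = Psi (normal σ) := by
  rcases normal_cases hn σ with ⟨h1, _⟩ | ⟨k, h1, h2⟩
  · rw [h1]
  · rw [h2, h1]
    exact Psi_patA_eq_patB hn k

lemma normal_image (hn : 3 ≤ n) :
    normal '' (Feas n) = Feas n \ Set.range (patA (n := n)) := by
  ext σ
  constructor
  · rintro ⟨ρ, hρ, rfl⟩
    refine ⟨normal_feas hn hρ, ?_⟩
    rintro ⟨k, hk⟩
    rcases normal_cases hn ρ with ⟨h1, h2⟩ | ⟨j, _, h2⟩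
    · rw [h1] at hk
      exact h2 k hk.symm
    · rw [h2] at hk
      exact patB_ne_patA hn j k hk.symm
  · rintro ⟨h1, h2⟩
    refine ⟨σ, h1, ?_⟩
    apply normal_of_not
    rintro ⟨k, hk⟩
    exact h2 ⟨k, hk.symm⟩

instance : Fintype Ordering := ⟨⟨{.lt, .eq, .gt}, by decide⟩, by intro x; cases x <;> decide⟩

def iotaLt : (ZMod n → Bool) → (ZMod n → Ordering) := fun b e => if b e then .lt else .eq
def iotaGt : (ZMod n → Bool) → (ZMod n → Ordering) := fun b e => if b e then .gt else .eq

lemma iotaLt_inj : Function.Injective (iotaLt (n := n)) := by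
  intro b b' hb
  funext e
  have h1 := congrFun hb e
  by_cases h2 : b e <;> by_cases h3 : b' e <;> simp_all [iotaLt]

lemma iotaGt_inj : Function.Injective (iotaGt (n := n)) := by
  intro b b' hb
  funext e
  have h1 := congrFun hb e
  by_cases h2 : b e <;> by_cases h3 : b' e <;> simp_all [iotaGt]

lemma range_iotaLt : Set.range (iotaLt (n := n)) = {σ | ∀ e, σ e ≠ .gt} := by
  ext σ
  constructor
  · rintro ⟨b, rfl⟩ e
    rw [iotaLt]
    split_ifs <;> simp
  · intro hσ
    refine ⟨fun e => decide (σ e = .lt), ?_⟩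
    funext e
    rw [iotaLt]
    by_cases h : σ e = .lt
    · rw [if_pos (by simpa using h), h]
    · rw [if_neg (by simpa using h), (ord_eq_of _ h (hσ e))]

lemma range_iotaGt : Set.range (iotaGt (n := n)) = {σ | ∀ e, σ e ≠ .lt} := by
  ext σ
  constructor
  · rintro ⟨b, rfl⟩ e
    rw [iotaGt]
    split_ifs <;> simp
  · intro hσ
    refine ⟨fun e => decide (σ e = .gt), ?_⟩
    funext e
    rw [iotaGt]
    by_cases h : σ e = .gt
    · rw [if_pos (by simpa using h), h]
    · rw [if_neg (by simpa using h), (ord_eq_of _ (hσ e) h)]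

lemma card_ordering : Fintype.card Ordering = 3 := rfl

lemma card_fun_ord (hn : 3 ≤ n) : Nat.card (ZMod n → Ordering) = 3 ^ n := by
  rw [Nat.card_eq_fintype_card, Fintype.card_fun, card_ordering, ZMod.card]

lemma ncard_noGt (hn : 3 ≤ n) : ({σ : ZMod n → Ordering | ∀ e, σ e ≠ .gt}).ncard = 2 ^ n := by
  rw [← range_iotaLt, ← Set.image_univ, Set.ncard_image_of_injective _ iotaLt_inj,
    Set.ncard_univ, Nat.card_eq_fintype_card, Fintype.card_fun, Fintype.card_bool, ZMod.card]

lemma ncard_noLt (hn : 3 ≤ n) : ({σ : ZMod n → Ordering | ∀ e, σ e ≠ .lt}).ncard = 2 ^ n := by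
  rw [← range_iotaGt, ← Set.image_univ, Set.ncard_image_of_injective _ iotaGt_inj,
    Set.ncard_univ, Nat.card_eq_fintype_card, Fintype.card_fun, Fintype.card_bool, ZMod.card]

lemma bad1_eq : {σ : ZMod n → Ordering | (∀ e, σ e ≠ .gt) ∧ (∃ e, σ e = .lt)}
    = {σ : ZMod n → Ordering | ∀ e, σ e ≠ .gt} \ {fun _ => .eq} := by
  ext σ
  simp only [Set.mem_setOf_eq, Set.mem_diff, Set.mem_singleton_iff]
  constructor
  · rintro ⟨h1, e, h2⟩
    refine ⟨h1, ?_⟩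
    intro hc
    rw [hc] at h2
    exact absurd h2 (by simp)
  · rintro ⟨h1, h2⟩
    refine ⟨h1, ?_⟩
    by_contra hc
    push_neg at hc
    exact h2 (funext fun e => ord_eq_of _ (hc e) (h1 e))

lemma bad2_eq : {σ : ZMod n → Ordering | (∀ e, σ e ≠ .lt) ∧ (∃ e, σ e = .gt)}
    = {σ : ZMod n → Ordering | ∀ e, σ e ≠ .lt} \ {fun _ => .eq} := by
  ext σ
  simp only [Set.mem_setOf_eq, Set.mem_diff, Set.mem_singleton_iff]
  constructor
  · rintro ⟨h1, e, h2⟩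
    refine ⟨h1, ?_⟩
    intro hc
    rw [hc] at h2
    exact absurd h2 (by simp)
  · rintro ⟨h1, h2⟩
    refine ⟨h1, ?_⟩
    by_contra hc
    push_neg at hc
    exact h2 (funext fun e => ord_eq_of _ (h1 e) (hc e))

lemma feas_compl : Feas n =
    ({σ : ZMod n → Ordering | (∀ e, σ e ≠ .gt) ∧ (∃ e, σ e = .lt)} ∪
     {σ : ZMod n → Ordering | (∀ e, σ e ≠ .lt) ∧ (∃ e, σ e = .gt)})ᶜ := by
  ext σ
  simp only [Feas, Set.mem_setOf_eq, Set.mem_compl_iff, Set.mem_union]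
  constructor
  · rintro (hall | ⟨⟨a, ha⟩, ⟨b, hb⟩⟩)
    · rintro (⟨_, e, he⟩ | ⟨_, e, he⟩) <;> rw [hall e] at he <;> exact absurd he (by simp)
    · rintro (⟨h1, _⟩ | ⟨h1, _⟩)
      · exact h1 b hb
      · exact h1 a ha
  · intro hc
    by_cases hl : ∃ e, σ e = .lt
    · by_cases hg : ∃ e, σ e = .gt
      · exact Or.inr ⟨hl, hg⟩
      · exfalso
        push_neg at hg
        exact hc (Or.inl ⟨hg, hl⟩)
    · push_neg at hl
      by_cases hg : ∃ e, σ e = .gt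
      · exfalso
        exact hc (Or.inr ⟨hl, hg⟩)
      · push_neg at hg
        exact Or.inl fun e => ord_eq_of _ (hl e) (hg e)

lemma pow_ineq {m : ℕ} (hm : 3 ≤ m) : 2 ^ (m + 1) + m + 2 ≤ 3 ^ m := by
  induction m, hm using Nat.le_induction with
  | base => norm_num
  | succ k hk ih =>
    have h1 : 2 ^ (k + 1 + 1) = 2 * 2 ^ (k + 1) := by ring
    have h2 : 3 ^ (k + 1) = 3 * 3 ^ k := by ring
    omega

lemma ncard_feas (hn : 3 ≤ n) : (Feas n).ncard = 3 ^ n - 2 ^ (n + 1) + 2 := by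
  have hB1 : ({σ : ZMod n → Ordering | (∀ e, σ e ≠ .gt) ∧ (∃ e, σ e = .lt)}).ncard
      = 2 ^ n - 1 := by
    rw [bad1_eq, Set.ncard_diff (by
      intro σ hσ
      simp only [Set.mem_singleton_iff] at hσ
      rw [hσ]
      intro e
      simp), ncard_noGt hn, Set.ncard_singleton]
  have hB2 : ({σ : ZMod n → Ordering | (∀ e, σ e ≠ .lt) ∧ (∃ e, σ e = .gt)}).ncard
      = 2 ^ n - 1 := by
    rw [bad2_eq, Set.ncard_diff (by
      intro σ hσ
      simp only [Set.mem_singleton_iff] at hσ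
      rw [hσ]
      intro e
      simp), ncard_noLt hn, Set.ncard_singleton]
  have hdisj : Disjoint {σ : ZMod n → Ordering | (∀ e, σ e ≠ .gt) ∧ (∃ e, σ e = .lt)}
      {σ : ZMod n → Ordering | (∀ e, σ e ≠ .lt) ∧ (∃ e, σ e = .gt)} := by
    rw [Set.disjoint_iff]
    rintro σ ⟨⟨_, a, ha⟩, ⟨h2, _⟩⟩
    exact absurd ha (h2 a)
  have hU := Set.ncard_union_eq hdisj (Set.toFinite _) (Set.toFinite _)
  have hcompl := Set.ncard_add_ncard_compl
    ({σ : ZMod n → Ordering | (∀ e, σ e ≠ .gt) ∧ (∃ e, σ e = .lt)} ∪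
     {σ : ZMod n → Ordering | (∀ e, σ e ≠ .lt) ∧ (∃ e, σ e = .gt)})
  rw [hU, hB1, hB2, card_fun_ord hn] at hcompl
  have hfc : 2 ^ n - 1 + (2 ^ n - 1) + (Feas n).ncard = 3 ^ n := by
    rw [feas_compl]
    exact hcompl
  have hp : (2:ℕ) ^ (n + 1) = 2 * 2 ^ n := by ring
  rw [hp]
  have hpow : 2 ^ (n + 1) + n + 2 ≤ 3 ^ n := pow_ineq hn
  rw [hp] at hpow
  obtain ⟨F, hF⟩ : ∃ x, (Feas n).ncard = x := ⟨_, rfl⟩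
  obtain ⟨x2, hx2⟩ : ∃ x, (2:ℕ) ^ n = x := ⟨_, rfl⟩
  obtain ⟨x3, hx3⟩ : ∃ x, (3:ℕ) ^ n = x := ⟨_, rfl⟩
  rw [hF, hx2, hx3] at hfc ⊢
  rw [hx2, hx3] at hpow
  have h2n : 1 ≤ x2 := hx2 ▸ Nat.one_le_two_pow
  clear hcompl hU hB1 hB2 hdisj hF hx2 hx3 hp
  omega

lemma ncard_range_patA (hn : 3 ≤ n) : (Set.range (patA (n := n))).ncard = n := by
  rw [← Set.image_univ, Set.ncard_image_of_injective _ (patA_inj hn),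
    Set.ncard_univ, Nat.card_eq_fintype_card, ZMod.card]

theorem main_count (hn : 3 ≤ n) :
    {g | ∃ τ : ZMod n → ℕ, g = ecaAsync n rule τ}.ncard = 3 ^ n - 2 ^ (n + 1) - n + 2 := by
  have hT : {g | ∃ τ : ZMod n → ℕ, g = ecaAsync n rule τ} = Psi '' (Feas n) := by
    ext g
    constructor
    · rintro ⟨τ, rfl⟩
      rw [async_eq_Psi (by omega : 1 ≤ n) τ]
      exact Set.mem_image_of_mem _ (sig_feas (by omega) τ)
    · rintro ⟨σ, hσ, rfl⟩
      obtain ⟨τ, hτ⟩ := exists_tau hn hσ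
      exact ⟨τ, by rw [async_eq_Psi (by omega : 1 ≤ n) τ, hτ]⟩
  have hT2 : Psi '' (Feas n) = Psi '' (normal '' (Feas n)) := by
    ext g
    constructor
    · rintro ⟨σ, hσ, rfl⟩
      rw [Psi_normal hn σ]
      exact Set.mem_image_of_mem _ (Set.mem_image_of_mem _ hσ)
    · rintro ⟨σ, ⟨ρ, hρ, rfl⟩, rfl⟩
      rw [← Psi_normal hn ρ]
      exact Set.mem_image_of_mem _ hρ
  have hinj : Set.InjOn Psi (normal '' (Feas n)) := by
    rintro σ1 ⟨ρ1, hρ1, rfl⟩ σ2 ⟨ρ2, hρ2, rfl⟩ hps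
    have hf1 : normal ρ1 ∈ Feas n := normal_feas hn hρ1
    have hf2 : normal ρ2 ∈ Feas n := normal_feas hn hρ2
    rcases Psi_inj hn hf1 hf2 hps with h | ⟨k, ⟨h1, h2⟩ | ⟨h1, h2⟩⟩
    · exact h
    · exfalso
      rcases normal_cases hn ρ1 with ⟨hx, hy⟩ | ⟨j, _, hx⟩
      · rw [hx] at h1
        exact hy k h1
      · rw [hx] at h1
        exact patB_ne_patA hn j k h1
    · exfalso
      rcases normal_cases hn ρ2 with ⟨hx, hy⟩ | ⟨j, _, hx⟩
      · rw [hx] at h2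
        exact hy k h2
      · rw [hx] at h2
        exact patB_ne_patA hn j k h2
  have hsub : Set.range (patA (n := n)) ⊆ Feas n := by
    rintro σ ⟨k, hk⟩
    rw [← hk]
    exact patA_feas hn k
  rw [hT, hT2, Set.ncard_image_of_injOn hinj, normal_image hn,
    Set.ncard_diff hsub, ncard_feas hn, ncard_range_patA hn]
  clear hT hT2 hinj hsub
  have hpow : 2 ^ (n + 1) + n + 2 ≤ 3 ^ n := pow_ineq hn
  obtain ⟨x2, hx2⟩ : ∃ x, (2:ℕ) ^ (n + 1) = x := ⟨_, rfl⟩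
  obtain ⟨x3, hx3⟩ : ∃ x, (3:ℕ) ^ n = x := ⟨_, rfl⟩
  rw [hx2, hx3] at hpow ⊢
  omega

end Runs
end R162


/-- Rule 162 (h a b c = (a ∨ ¬b) ∧ c): the number of distinct asynchronous
global functions equals $3^n - 2^{n+1} - n + 2$. -/
theorem rule_162_count (n : ℕ) (hn : 3 ≤ n) :
    {g | ∃ τ : ZMod n → ℕ, g = ecaAsync n (fun a b c => (a || !b) && c) τ}.ncard
      = 3 ^ n - 2 ^ (n + 1) - n + 2 := by
  haveI : NeZero n := ⟨by omega⟩
  have h : (fun a b c => (a || !b) && c) = R162.rule := rfl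
  rw [h]
  exact R162.main_count hn
end
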